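/- arXiv:1307.3204 — 11 statements merged into one kernel-verified Lean document; each statement's English description precedes it below -/
import Mathlib

section
/- Let f : ℂ → ℂ^d be analytic on the open unit disc, extend continuously to 1, map the disc into the open unit ball, and satisfy ‖f(1)‖ = 1. Then for all z in the open unit disc, (1 - |⟨f(z), f(1)⟩|)/(1 - |z|) ≥ (1 - |a|)/(1 + |a|) > 0, where a = ⟨f(0), f(1)⟩. -/
open Metric

set_option maxHeartbeats 1600000 in
/-- Schwarz–Pick type bound for an analytic disc in the ball of ℂ^d
that extends continuously to 1 with ‖f 1‖ = 1. Here the paper's ⟨f z, f 1⟩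
(linear in the first slot) is Mathlib's `inner (f 1) (f z)`. -/
theorem stmt0 (d : ℕ) (f : ℂ → EuclideanSpace ℂ (Fin d))
    (hf : DifferentiableOn ℂ f (ball 0 1))
    (hcont : ContinuousWithinAt f (insert (1 : ℂ) (ball 0 1)) 1)
    (hmap : ∀ z ∈ ball (0 : ℂ) 1, ‖f z‖ < 1)
    (hf1 : ‖f 1‖ = 1) :
    ∀ z ∈ ball (0 : ℂ) 1,
      0 < (1 - ‖(inner ℂ (f 1) (f 0) : ℂ)‖) /
            (1 + ‖(inner ℂ (f 1) (f 0) : ℂ)‖) ∧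
      (1 - ‖(inner ℂ (f 1) (f 0) : ℂ)‖) /
            (1 + ‖(inner ℂ (f 1) (f 0) : ℂ)‖) ≤
        (1 - ‖(inner ℂ (f 1) (f z) : ℂ)‖) / (1 - ‖z‖) := by
  intro z hz
  set g : ℂ → ℂ := fun w => inner ℂ (f 1) (f w) with hgdef
  set a : ℂ := g 0 with hadef
  -- g is differentiable on the ball
  have hgd : DifferentiableOn ℂ g (ball 0 1) :=
    (innerSL ℂ (f 1)).differentiable.comp_differentiableOn hf
  -- |g w| < 1 on the ball
  have hglt : ∀ w ∈ ball (0 : ℂ) 1, ‖g w‖ < 1 := by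
    intro w hw
    have h1 : ‖(inner ℂ (f 1) (f w) : ℂ)‖ ≤ ‖f 1‖ * ‖f w‖ := norm_inner_le_norm _ _
    rw [hf1, one_mul] at h1
    calc ‖g w‖ ≤ ‖f w‖ := h1
    _ < 1 := hmap w hw
  have h0mem : (0 : ℂ) ∈ ball (0 : ℂ) 1 := by simp
  have ha1 : ‖a‖ < 1 := hglt 0 h0mem
  have ha0 : 0 ≤ ‖a‖ := norm_nonneg _
  -- denominator of the Möbius map is nonzero
  have hden : ∀ w : ℂ, ‖w‖ < 1 → (1 : ℂ) - (starRingEnd ℂ) a * w ≠ 0 := by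
    intro w hw h0
    have h1 : (starRingEnd ℂ) a * w = 1 := by linear_combination -h0
    have h2 : ‖(starRingEnd ℂ) a * w‖ < 1 := by
      rw [norm_mul, Complex.norm_conj]
      calc ‖a‖ * ‖w‖ ≤ 1 * ‖w‖ := by
            apply mul_le_mul_of_nonneg_right ha1.le (norm_nonneg _)
        _ < 1 := by simpa using hw
    rw [h1] at h2; simp at h2
  -- key normSq identity
  have key : ∀ b : ℂ, Complex.normSq ((1 : ℂ) - (starRingEnd ℂ) a * b) - Complex.normSq (a - b)
      = (1 - Complex.normSq a) * (1 - Complex.normSq b) := by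
    intro b
    simp only [Complex.normSq_apply, Complex.sub_re, Complex.sub_im, Complex.mul_re,
      Complex.mul_im, Complex.one_re, Complex.one_im, Complex.conj_re, Complex.conj_im]
    ring
  have hsq : ∀ b : ℂ, ‖b‖ < 1 →
      ‖a - b‖ < ‖(1 : ℂ) - (starRingEnd ℂ) a * b‖ := by
    intro b hb
    have h1 : Complex.normSq a < 1 := by
      have := Complex.sq_norm a; nlinarith [norm_nonneg a]
    have h2 : Complex.normSq b < 1 := by
      have := Complex.sq_norm b; nlinarith [norm_nonneg b]
    have h3 : Complex.normSq (a - b) < Complex.normSq ((1 : ℂ) - (starRingEnd ℂ) a * b) := by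
      have := key b; nlinarith
    have := Real.sqrt_lt_sqrt (Complex.normSq_nonneg _) h3
    simpa [Complex.norm_def] using this
  -- the Möbius-composed map h
  set h : ℂ → ℂ := fun w => (a - g w) / (1 - (starRingEnd ℂ) a * g w) with hhdef
  have hhd : DifferentiableOn ℂ h (ball 0 1) := by
    apply DifferentiableOn.div ((differentiableOn_const a).sub hgd)
      ((differentiableOn_const 1).sub (hgd.const_mul _))
    intro w hw; exact hden (g w) (hglt w hw)
  have hhmaps : Set.MapsTo h (ball 0 1) (ball 0 1) := by
    intro w hw
    rw [mem_ball_zero_iff]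
    have hlt := hsq (g w) (hglt w hw)
    have hdpos : 0 < ‖(1 : ℂ) - (starRingEnd ℂ) a * g w‖ :=
      norm_pos_iff.mpr (hden (g w) (hglt w hw))
    show ‖(a - g w) / (1 - (starRingEnd ℂ) a * g w)‖ < 1
    rw [norm_div, div_lt_one hdpos]
    exact hlt
  have hh0 : h 0 = 0 := by simp [hhdef, hadef]
  have hzlt : ‖z‖ < 1 := by simpa [Complex.norm_def] using mem_ball_zero_iff.mp hz
  have hschwarz : ‖h z‖ ≤ ‖z‖ :=
    Complex.norm_le_norm_of_mapsTo_ball hhd (hhmaps.mono_right ball_subset_closedBall) hh0 hzlt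
  -- unpack Schwarz into an inequality on numerator/denominator
  set b : ℂ := g z with hbdef
  have hb1 : ‖b‖ < 1 := hglt z hz
  have hdne : (1 : ℂ) - (starRingEnd ℂ) a * b ≠ 0 := hden b hb1
  have hdpos : 0 < ‖(1 : ℂ) - (starRingEnd ℂ) a * b‖ := norm_pos_iff.mpr hdne
  have hnum : ‖a - b‖ ≤ ‖z‖ * ‖(1 : ℂ) - (starRingEnd ℂ) a * b‖ := by
    have : ‖a - b‖ / ‖(1 : ℂ) - (starRingEnd ℂ) a * b‖ ≤ ‖z‖ := by
      rw [← norm_div]; exact hschwarz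
    rwa [div_le_iff₀ hdpos] at this
  -- pass to squares / normSq
  set α := ‖a‖ with hαdef
  set s := ‖b‖ with hsdef
  set ρ := ‖z‖ with hρdef
  have hs0 : 0 ≤ s := norm_nonneg _
  have hρ0 : 0 ≤ ρ := norm_nonneg _
  set t := ((starRingEnd ℂ) a * b).re with htdef
  have ht : |t| ≤ α * s := by
    have h1 : |((starRingEnd ℂ) a * b).re| ≤ ‖(starRingEnd ℂ) a * b‖ :=
      Complex.abs_re_le_norm _
    rwa [norm_mul, Complex.norm_conj] at h1
  have e1 : ‖a - b‖ ^ 2 = α ^ 2 - 2 * t + s ^ 2 := by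
    rw [hαdef, hsdef, Complex.sq_norm, Complex.sq_norm, Complex.sq_norm]
    simp only [htdef, Complex.normSq_apply, Complex.sub_re, Complex.sub_im, Complex.mul_re,
      Complex.mul_im, Complex.conj_re, Complex.conj_im]
    ring
  have e2 : ‖(1 : ℂ) - (starRingEnd ℂ) a * b‖ ^ 2 = 1 - 2 * t + α ^ 2 * s ^ 2 := by
    rw [hαdef, hsdef, Complex.sq_norm, Complex.sq_norm, Complex.sq_norm]
    simp only [htdef, Complex.normSq_apply, Complex.sub_re, Complex.sub_im, Complex.mul_re,
      Complex.mul_im, Complex.one_re, Complex.one_im, Complex.conj_re, Complex.conj_im]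
    ring
  have hQ : α ^ 2 - 2 * t + s ^ 2 ≤ ρ ^ 2 * (1 - 2 * t + α ^ 2 * s ^ 2) := by
    have h1 : ‖a - b‖ ^ 2 ≤ (ρ * ‖(1 : ℂ) - (starRingEnd ℂ) a * b‖) ^ 2 :=
      pow_le_pow_left₀ (norm_nonneg _) hnum 2
    rw [e1, mul_pow, e2] at h1
    exact h1
  have htle : t ≤ α * s := (abs_le.mp ht).2
  have hone : 0 < 1 - ρ ^ 2 := by nlinarith
  have hmt : t * (1 - ρ ^ 2) ≤ α * s * (1 - ρ ^ 2) := mul_le_mul_of_nonneg_right htle hone.le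
  have hQ2 : (1 - ρ ^ 2 * α ^ 2) * s ^ 2 - 2 * α * s * (1 - ρ ^ 2) + α ^ 2 - ρ ^ 2 ≤ 0 := by
    nlinarith [hQ, hmt]
  have has1 : α * s < 1 := by nlinarith
  -- deduce s * (1 + αρ) ≤ α + ρ
  have hkey : s * (1 + α * ρ) ≤ α + ρ := by
    by_contra hc
    push_neg at hc
    have hX : 0 < s * (1 + α * ρ) - (α + ρ) := by linarith
    have hY : 0 < (1 - α * ρ) * s - (α - ρ) := by nlinarith [mul_nonneg hρ0 (by linarith : (0:ℝ) ≤ 1 - α * s)]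
    have hprod := mul_pos hX hY
    have heq : (s * (1 + α * ρ) - (α + ρ)) * ((1 - α * ρ) * s - (α - ρ))
        = (1 - ρ ^ 2 * α ^ 2) * s ^ 2 - 2 * α * s * (1 - ρ ^ 2) + α ^ 2 - ρ ^ 2 := by ring
    rw [heq] at hprod
    linarith
  constructor
  · apply div_pos <;> linarith only [ha0, ha1]
  · rw [div_le_div_iff₀ (by linarith only [ha0]) (by linarith only [hzlt])]
    have h5 : 0 ≤ (1 - s) * (α - α * ρ) :=
      mul_nonneg (by linarith only [hb1]) (by nlinarith [mul_le_mul_of_nonneg_left hzlt.le ha0])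
    nlinarith [hkey, h5]
end

section
/- Let f : 𝔻 → B_d be a proper analytic map of the open unit disc into the open unit ball of ℂ^d which extends to be continuously differentiable on the closed disc. Then for every z on the unit circle, Re⟨f(z), f'(z)·z⟩ > 0; in particular ⟨f(z), f'(z)⟩ ≠ 0, i.e., f meets the boundary sphere transversally. -/
open Metric Complex Set Filter Topology

lemma mobius_lt (a u : ℂ) (ha : ‖a‖ < 1) (hu : ‖u‖ < 1) :
    ‖u - a‖ < ‖1 - (starRingEnd ℂ) a * u‖ := by
  have key : Complex.normSq (1 - (starRingEnd ℂ) a * u) - Complex.normSq (u - a)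
      = (1 - Complex.normSq a) * (1 - Complex.normSq u) := by
    simp only [Complex.normSq_apply, Complex.sub_re, Complex.sub_im, Complex.mul_re,
      Complex.mul_im, Complex.conj_re, Complex.conj_im, Complex.one_re, Complex.one_im]
    ring
  have h1 : Complex.normSq a < 1 := by
    rw [← Complex.sq_norm]; nlinarith [norm_nonneg a]
  have h2 : Complex.normSq u < 1 := by
    rw [← Complex.sq_norm]; nlinarith [norm_nonneg u]
  have h3 : Complex.normSq (u - a) < Complex.normSq (1 - (starRingEnd ℂ) a * u) := by nlinarith
  have := Real.sqrt_lt_sqrt (Complex.normSq_nonneg _) h3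
  simpa [Complex.norm_def] using this

lemma quad_est (m α r x : ℝ) (hm0 : 0 ≤ m) (hα0 : 0 ≤ α) (hr0 : 0 ≤ r)
    (hα : α < 1) (hr : r < 1) (hx : x ≤ α * m)
    (h : m^2 + α^2 - 2*x ≤ r^2 * (1 + α^2*m^2 - 2*x)) :
    (1 - α)/2 * (1 - r) ≤ 1 - m := by
  have hαr : α * r < 1 := by nlinarith
  have h1r : (0:ℝ) < 1 - r^2 := by nlinarith
  have hq : ((1+α*r)*m - (α+r)) * ((1-α*r)*m - (α-r)) ≤ 0 := by
    nlinarith [mul_le_mul_of_nonneg_left hx h1r.le]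
  have key : m * (1 + α*r) ≤ α + r := by
    by_contra hc
    push_neg at hc
    have hA : 0 < (1+α*r)*m - (α+r) := by nlinarith
    have hB' : 0 < (1+α*r) * ((1-α*r)*m - (α-r)) := by
      nlinarith [mul_pos (show (0:ℝ) < 1 - α*r by linarith) hA,
        mul_nonneg hr0 (show (0:ℝ) ≤ 1 - α^2 by nlinarith)]
    have hB : 0 < (1-α*r)*m - (α-r) := by
      by_contra hb
      push_neg at hb
      nlinarith [mul_le_mul_of_nonneg_left hb (show (0:ℝ) ≤ 1+α*r by nlinarith)]
    exact absurd hq (not_le.mpr (mul_pos hA hB))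
  by_contra hc
  push_neg at hc
  nlinarith [mul_lt_mul_of_pos_left hc (show (0:ℝ) < 1+α*r by nlinarith), key,
    mul_nonneg (mul_nonneg (show (0:ℝ) ≤ 1-α by linarith)
      (show (0:ℝ) ≤ 1-r by linarith)) (show (0:ℝ) ≤ 1-α*r by linarith)]

/-- Schwarz–Pick type bound. -/
lemma schwarz_pick_bound (φ : ℂ → ℂ) (hd : DifferentiableOn ℂ φ (ball 0 1))
    (hm : Set.MapsTo φ (ball 0 1) (ball 0 1)) {w : ℂ} (hw : ‖w‖ < 1) :
    (1 - ‖φ 0‖) / 2 * (1 - ‖w‖) ≤ 1 - ‖φ w‖ := by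
  have h0 : (0:ℂ) ∈ ball (0:ℂ) 1 := by simp
  set a := φ 0 with ha_def
  have ha : ‖a‖ < 1 := by simpa using hm h0
  set ψ : ℂ → ℂ := fun u => (φ u - a) / (1 - (starRingEnd ℂ) a * φ u) with hψ
  have hden : ∀ u ∈ ball (0:ℂ) 1, 1 - (starRingEnd ℂ) a * φ u ≠ 0 := by
    intro u hu
    have hφu : ‖φ u‖ < 1 := by simpa using hm hu
    have habs : ‖(starRingEnd ℂ) a * φ u‖ < 1 := by
      rw [norm_mul]
      simp only [Complex.norm_conj]
      nlinarith [norm_nonneg a, norm_nonneg (φ u)]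
    intro h
    rw [sub_eq_zero] at h
    rw [← h] at habs
    simp at habs
  have hψd : DifferentiableOn ℂ ψ (ball 0 1) := by
    apply DifferentiableOn.div (hd.sub_const a)
    · exact (differentiableOn_const _).sub ((differentiableOn_const _).mul hd)
    · exact hden
  have hψm : Set.MapsTo ψ (ball 0 1) (ball 0 1) := by
    intro u hu
    have hφu : ‖φ u‖ < 1 := by simpa using hm hu
    have hlt := mobius_lt a (φ u) ha hφu
    rw [mem_ball_zero_iff, hψ]
    simp only
    rw [norm_div]
    rw [div_lt_one (by simpa using norm_pos_iff.mpr (hden u hu))]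
    simpa using hlt
  have hψ0 : ψ 0 = 0 := by
    rw [hψ]; simp [ha_def]
  have hsch : ‖ψ w‖ ≤ ‖w‖ :=
    Complex.norm_le_norm_of_mapsTo_ball hψd (hψm.mono_right ball_subset_closedBall) hψ0 hw
  -- unfold ψ and clear denominators
  have hwball : w ∈ ball (0:ℂ) 1 := mem_ball_zero_iff.2 hw
  have hφw : ‖φ w‖ < 1 := by simpa using hm hwball
  have hdw := hden w hwball
  have hineq : ‖φ w - a‖ ≤ ‖w‖ * ‖1 - (starRingEnd ℂ) a * φ w‖ := by
    have : ‖ψ w‖ = ‖φ w - a‖ / ‖1 - (starRingEnd ℂ) a * φ w‖ := by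
      rw [hψ]; simp [norm_div]
    rw [this] at hsch
    rwa [div_le_iff₀ (norm_pos_iff.mpr hdw)] at hsch
  -- square it and expand
  have hsq : Complex.normSq (φ w - a) ≤
      (‖w‖)^2 * Complex.normSq (1 - (starRingEnd ℂ) a * φ w) := by
    rw [← Complex.sq_norm, ← Complex.sq_norm]
    calc (‖φ w - a‖)^2
        ≤ (‖w‖ * ‖1 - (starRingEnd ℂ) a * φ w‖)^2 := by
          apply pow_le_pow_left₀ (norm_nonneg _) hineq
      _ = (‖w‖)^2 * (‖1 - (starRingEnd ℂ) a * φ w‖)^2 := by ring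
  have e1 : Complex.normSq (φ w - a)
      = Complex.normSq (φ w) + Complex.normSq a - 2 * (φ w * (starRingEnd ℂ) a).re := by
    simp only [Complex.normSq_apply, Complex.sub_re, Complex.sub_im, Complex.mul_re,
      Complex.mul_im, Complex.conj_re, Complex.conj_im]
    ring
  have e2 : Complex.normSq (1 - (starRingEnd ℂ) a * φ w)
      = 1 + Complex.normSq a * Complex.normSq (φ w) - 2 * (φ w * (starRingEnd ℂ) a).re := by
    simp only [Complex.normSq_apply, Complex.sub_re, Complex.sub_im, Complex.mul_re,
      Complex.mul_im, Complex.conj_re, Complex.conj_im, Complex.one_re, Complex.one_im]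
    ring
  have hx : (φ w * (starRingEnd ℂ) a).re ≤ ‖a‖ * ‖φ w‖ := by
    calc (φ w * (starRingEnd ℂ) a).re ≤ ‖φ w * (starRingEnd ℂ) a‖ := Complex.re_le_norm _
      _ = ‖a‖ * ‖φ w‖ := by rw [norm_mul, Complex.norm_conj]; ring
  apply quad_est (‖φ w‖) (‖a‖) (‖w‖)
    ((φ w * (starRingEnd ℂ) a).re) (norm_nonneg _) (norm_nonneg _)
    (norm_nonneg _) ha hw hx
  rw [e1, e2] at hsq
  rw [← Complex.sq_norm a, ← Complex.sq_norm (φ w)] at hsq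
  linarith [hsq]

/-- a proper analytic map `f : 𝔻 → B_d` which is `C¹` up to the closed
disc (with complex derivative `f'`) meets the sphere transversally: for `|z| = 1`,
`Re⟨f z, f' z · z⟩ > 0` and in particular `⟨f z, f' z⟩ ≠ 0`. The paper's inner
product `⟨u, v⟩` (linear in the first slot) is Mathlib's `inner v u`. -/
theorem stmt2 (d : ℕ) (f f' : ℂ → EuclideanSpace ℂ (Fin d))
    (hderiv : ∀ z ∈ closedBall (0 : ℂ) 1, HasDerivWithinAt f (f' z) (closedBall 0 1) z)
    (hC1 : ContinuousOn f' (closedBall (0 : ℂ) 1))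
    (hmap : ∀ z ∈ ball (0 : ℂ) 1, ‖f z‖ < 1)
    (hproper : ∀ ε : ℝ, 0 < ε → ∃ r : ℝ, r < 1 ∧
      ∀ z ∈ ball (0 : ℂ) 1, r < ‖z‖ → 1 - ε < ‖f z‖) :
    ∀ z : ℂ, ‖z‖ = 1 →
      0 < (inner ℂ (z • f' z) (f z) : ℂ).re ∧ (inner ℂ (f' z) (f z) : ℂ) ≠ 0 := by
  intro z hz
  have hzS : z ∈ closedBall (0:ℂ) 1 := by
    rw [mem_closedBall_zero_iff, hz]
  have hfc : ContinuousOn f (closedBall (0:ℂ) 1) := fun w hw => (hderiv w hw).continuousWithinAt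
  set c : ℝ → ℂ := fun t => (t:ℂ) * z with hc
  have habs_c : ∀ t : ℝ, 0 ≤ t → ‖c t‖ = t := by
    intro t ht
    simp [hc, norm_mul, Complex.norm_real, hz, _root_.abs_of_nonneg ht]
  have hcB : ∀ t ∈ Set.Ico (0:ℝ) 1, c t ∈ ball (0:ℂ) 1 := by
    intro t ht
    rw [mem_ball_zero_iff, habs_c t ht.1]
    exact ht.2
  have hcS : ∀ t ∈ Set.Icc (0:ℝ) 1, c t ∈ closedBall (0:ℂ) 1 := by
    intro t ht
    rw [mem_closedBall_zero_iff, habs_c t ht.1]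
    exact ht.2
  have hc1 : c 1 = z := by simp [hc]
  haveI : (𝓝[Set.Ico (0:ℝ) 1] 1).NeBot := right_nhdsWithin_Ico_neBot one_pos
  -- ‖f z‖ = 1
  have htendc : Tendsto c (𝓝[Set.Ico (0:ℝ) 1] 1) (𝓝[closedBall (0:ℂ) 1] z) := by
    rw [tendsto_nhdsWithin_iff]
    constructor
    · have hcont : Continuous c := Complex.continuous_ofReal.mul continuous_const
      exact tendsto_nhdsWithin_of_tendsto_nhds (by simpa [hc1] using hcont.tendsto 1)
    · exact eventually_of_mem self_mem_nhdsWithin fun t ht => hcS t (Set.Ico_subset_Icc_self ht)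
  have hnormt : Tendsto (fun t => ‖f (c t)‖) (𝓝[Set.Ico (0:ℝ) 1] 1) (𝓝 ‖f z‖) :=
    ((hfc z hzS).tendsto.comp htendc).norm
  have hle : ‖f z‖ ≤ 1 :=
    le_of_tendsto hnormt (eventually_of_mem self_mem_nhdsWithin fun t ht => (hmap _ (hcB t ht)).le)
  have hge : 1 ≤ ‖f z‖ := by
    apply le_of_forall_sub_le
    intro ε hε
    obtain ⟨r, hr1, hr⟩ := hproper ε hε
    have hmax : max r 0 < 1 := max_lt hr1 one_pos
    apply ge_of_tendsto hnormt
    have h1 : ∀ᶠ t : ℝ in 𝓝[Set.Ico (0:ℝ) 1] 1, max r 0 < t :=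
      eventually_nhdsWithin_of_eventually_nhds (lt_mem_nhds hmax)
    filter_upwards [self_mem_nhdsWithin, h1] with t ht hmt
    have hbt : c t ∈ ball (0:ℂ) 1 := hcB t ht
    have : r < ‖c t‖ := by
      rw [habs_c t ht.1]
      exact lt_of_le_of_lt (le_max_left r 0) hmt
    linarith [hr (c t) hbt this]
  have hfz : ‖f z‖ = 1 := le_antisymm hle hge
  -- the scalar function φ
  set φ : ℂ → ℂ := fun w => (inner ℂ (f z) (f w) : ℂ) with hφ
  have hφabs : ∀ w, ‖φ w‖ ≤ ‖f w‖ := by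
    intro w
    calc ‖φ w‖ = ‖(inner ℂ (f z) (f w) : ℂ)‖ := rfl
      _ ≤ ‖f z‖ * ‖f w‖ := norm_inner_le_norm _ _
      _ = ‖f w‖ := by rw [hfz, one_mul]
  have hφz : φ z = 1 := by
    rw [hφ]
    simp only
    rw [inner_self_eq_norm_sq_to_K, hfz]
    norm_num
  have hφm : Set.MapsTo φ (ball 0 1) (ball 0 1) := by
    intro w hw
    rw [mem_ball_zero_iff]
    exact lt_of_le_of_lt (hφabs w) (hmap w hw)
  have hφd : DifferentiableOn ℂ φ (ball 0 1) := by
    intro w hw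
    have hfw : HasDerivAt f (f' w) w :=
      (hderiv w (ball_subset_closedBall hw)).hasDerivAt (closedBall_mem_nhds_of_mem hw)
    exact ((innerSL ℂ (f z)).hasFDerivAt.comp_hasDerivAt w hfw).differentiableAt.differentiableWithinAt
  have hf0 : ‖f 0‖ < 1 := hmap 0 (by simp)
  set c0 : ℝ := (1 - ‖φ 0‖) / 2 with hc0def
  have hc0 : 0 < c0 := by
    have := lt_of_le_of_lt (hφabs 0) hf0
    rw [hc0def]; linarith
  -- boundary bound for re φ along the radius
  have hb : ∀ t ∈ Set.Ico (0:ℝ) 1, (φ (c t)).re ≤ 1 - c0 * (1 - t) := by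
    intro t ht
    have h1 := schwarz_pick_bound φ hφd hφm (w := c t) (by rw [habs_c t ht.1]; exact ht.2)
    rw [habs_c t ht.1] at h1
    have h2 := Complex.re_le_norm (φ (c t))
    rw [← hc0def] at h1
    linarith
  -- derivative of t ↦ re (φ (c t)) at 1
  set D : ℂ := (inner ℂ (f z) (f' z) : ℂ) with hD
  have hφder : HasDerivWithinAt φ D (closedBall (0:ℂ) 1) z :=
    (innerSL ℂ (f z)).hasFDerivAt.comp_hasDerivWithinAt z (hderiv z hzS)
  have hcder : HasDerivWithinAt c z (Set.Icc (0:ℝ) 1) 1 := by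
    have h := (Complex.ofRealCLM.hasDerivAt (x := (1:ℝ))).mul_const z
    have h2 : HasDerivAt c (Complex.ofRealCLM 1 * z) 1 := h
    simpa using h2.hasDerivWithinAt
  have hcomp : HasDerivWithinAt (φ ∘ c) (z • D) (Set.Icc (0:ℝ) 1) 1 :=
    HasDerivWithinAt.scomp_of_eq (1:ℝ) hφder hcder hcS hc1.symm
  have hgder : HasDerivWithinAt (fun t : ℝ => (φ (c t)).re) ((z * D).re) (Set.Icc (0:ℝ) 1) 1 := by
    have h := Complex.reCLM.hasFDerivAt.comp_hasDerivWithinAt (1:ℝ) hcomp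
    simpa [Function.comp_def, smul_eq_mul] using h
  -- slope estimate
  have hL : c0 ≤ (z * D).re := by
    have hslope := hasDerivWithinAt_iff_tendsto_slope.mp hgder
    rw [Set.Icc_sdiff_right] at hslope
    apply ge_of_tendsto hslope
    apply eventually_of_mem self_mem_nhdsWithin
    intro t ht
    have hgt := hb t ht
    have hg1 : (φ (c 1)).re = 1 := by rw [hc1, hφz]; norm_num
    have ht1 : t - 1 < 0 := by linarith [ht.2]
    rw [slope_def_field, le_div_iff_of_neg ht1]
    nlinarith
  have hpos : 0 < (z * D).re := lt_of_lt_of_le hc0 hL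
  -- translate to the statement's inner products
  have hrel : (inner ℂ (z • f' z) (f z) : ℂ).re = (z * D).re := by
    rw [inner_smul_left]
    have h1 : (inner ℂ (f' z) (f z) : ℂ) = (starRingEnd ℂ) D := by
      rw [hD, inner_conj_symm]
    rw [h1, ← map_mul, Complex.conj_re]
  refine ⟨by rw [hrel]; exact hpos, ?_⟩
  intro h0
  have hz0 : (inner ℂ (z • f' z) (f z) : ℂ) = 0 := by
    rw [inner_smul_left, h0, mul_zero]
  have hre0 : (z * D).re = 0 := by rw [← hrel, hz0]; simp
  linarith
end

section
/- Let φ : [0,1] → B be a differentiable map into the closed unit ball of a real Hilbert space with ‖φ(1)‖ = 1 and ⟨φ'(1), φ(1)⟩ > 0. Then as x → 1, the quantities ‖φ(1) - φ(x)‖, 1 - ‖φ(x)‖, and 1 - x are pairwise comparable, i.e., each ratio tends to a finite positive limit. -/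
open Filter

/-- for a differentiable map `φ : [0,1] → B` into the closed unit ball
of a real Hilbert space with `‖φ 1‖ = 1` and `⟨φ' 1, φ 1⟩ > 0`, the quantities
`‖φ 1 - φ x‖`, `1 - ‖φ x‖` and `1 - x` are pairwise comparable as `x → 1⁻`:
each ratio tends to a finite positive limit. -/
theorem stmt3 {H : Type*} [NormedAddCommGroup H] [InnerProductSpace ℝ H]
    (φ φ' : ℝ → H)
    (hdiff : ∀ x ∈ Set.Icc (0 : ℝ) 1, HasDerivWithinAt φ (φ' x) (Set.Icc 0 1) x)
    (hball : ∀ x ∈ Set.Icc (0 : ℝ) 1, ‖φ x‖ ≤ 1)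
    (hnorm : ‖φ 1‖ = 1)
    (hpos : 0 < (inner ℝ (φ' 1) (φ 1) : ℝ)) :
    ∃ c₁ c₂ c₃ : ℝ, 0 < c₁ ∧ 0 < c₂ ∧ 0 < c₃ ∧
      Tendsto (fun x => ‖φ 1 - φ x‖ / (1 - x)) (nhdsWithin 1 (Set.Ico 0 1)) (nhds c₁) ∧
      Tendsto (fun x => (1 - ‖φ x‖) / (1 - x)) (nhdsWithin 1 (Set.Ico 0 1)) (nhds c₂) ∧
      Tendsto (fun x => (1 - ‖φ x‖) / ‖φ 1 - φ x‖) (nhdsWithin 1 (Set.Ico 0 1)) (nhds c₃) := by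
  have h1mem : (1 : ℝ) ∈ Set.Icc (0 : ℝ) 1 := ⟨zero_le_one, le_refl 1⟩
  have hd1 := hdiff 1 h1mem
  set L := nhdsWithin (1 : ℝ) (Set.Ico 0 1) with hLdef
  have hLle : L ≤ nhdsWithin 1 (Set.Icc (0:ℝ) 1 \ {1}) := by
    apply nhdsWithin_mono
    rintro x ⟨h0, h1⟩
    exact ⟨⟨h0, le_of_lt h1⟩, ne_of_lt h1⟩
  have hmem : ∀ᶠ x in L, x ∈ Set.Ico (0:ℝ) 1 := eventually_mem_nhdsWithin
  -- c₁ part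
  have hslope : Tendsto (slope φ 1) L (nhds (φ' 1)) :=
    (hasDerivWithinAt_iff_tendsto_slope.mp hd1).mono_left hLle
  have hv_ne : φ' 1 ≠ 0 := by
    intro h
    rw [h] at hpos
    simp at hpos
  have hc1pos : (0:ℝ) < ‖φ' 1‖ := norm_pos_iff.mpr hv_ne
  have key1 : ∀ᶠ x in L, ‖slope φ 1 x‖ = ‖φ 1 - φ x‖ / (1 - x) := by
    filter_upwards [hmem] with x hx
    have hx1 : (0:ℝ) < 1 - x := by linarith [hx.2]
    rw [slope_def_module, norm_smul, norm_inv, Real.norm_eq_abs,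
      abs_of_neg (by linarith : x - 1 < 0), ← norm_neg (φ x - φ 1)]
    simp only [neg_sub]
    rw [inv_mul_eq_div]
  have h1 : Tendsto (fun x => ‖φ 1 - φ x‖ / (1 - x)) L (nhds ‖φ' 1‖) :=
    (hslope.norm).congr' key1
  -- continuity of ‖φ x‖
  have hcont : Tendsto (fun x => ‖φ x‖) L (nhds 1) := by
    have := (hd1.continuousWithinAt.tendsto).mono_left
      (nhdsWithin_mono 1 (Set.Ico_subset_Icc_self))
    rw [← hnorm]
    exact this.norm
  -- derivative of squared norm
  have hg : HasDerivWithinAt (fun t => (inner ℝ (φ t) (φ t) : ℝ))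
      (inner ℝ (φ 1) (φ' 1) + inner ℝ (φ' 1) (φ 1)) (Set.Icc 0 1) 1 := hd1.inner ℝ hd1
  have hgslope : Tendsto (slope (fun t => (inner ℝ (φ t) (φ t) : ℝ)) 1) L
      (nhds (2 * (inner ℝ (φ' 1) (φ 1) : ℝ))) := by
    have := (hasDerivWithinAt_iff_tendsto_slope.mp hg).mono_left hLle
    convert this using 2
    rw [real_inner_comm (φ 1) (φ' 1)]
    ring
  have hden : Tendsto (fun x => 1 + ‖φ x‖) L (nhds 2) := by
    have := (tendsto_const_nhds (α := ℝ) (x := (1:ℝ))).add hcont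
    norm_num at this
    exact this
  have key2 : ∀ᶠ x in L, slope (fun t => (inner ℝ (φ t) (φ t) : ℝ)) 1 x / (1 + ‖φ x‖)
      = (1 - ‖φ x‖) / (1 - x) := by
    filter_upwards [hmem] with x hx
    have hx1 : (1:ℝ) - x ≠ 0 := by have := hx.2; intro h; linarith
    have hd : (0:ℝ) < 1 + ‖φ x‖ := by positivity
    have hx1' : x - 1 ≠ 0 := by intro h; apply hx1; linarith
    rw [slope_def_field, real_inner_self_eq_norm_sq, real_inner_self_eq_norm_sq, hnorm,
      div_div, div_eq_div_iff (mul_ne_zero hx1' (ne_of_gt hd)) hx1]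
    ring
  have h2 : Tendsto (fun x => (1 - ‖φ x‖) / (1 - x)) L
      (nhds ((inner ℝ (φ' 1) (φ 1) : ℝ))) := by
    have := (hgslope.div hden (by norm_num)).congr' key2
    convert this using 2
    ring
  -- c₃ part
  have h3 : Tendsto (fun x => (1 - ‖φ x‖) / ‖φ 1 - φ x‖) L
      (nhds ((inner ℝ (φ' 1) (φ 1) : ℝ) / ‖φ' 1‖)) := by
    have := h2.div h1 (ne_of_gt hc1pos)
    apply this.congr'
    filter_upwards [hmem] with x hx
    have hx1 : (1:ℝ) - x ≠ 0 := by have := hx.2; intro h; linarith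
    simp only [Pi.div_apply]
    rw [div_div_div_cancel_right₀ hx1]
  exact ⟨‖φ' 1‖, _, _, hc1pos, hpos, div_pos hpos hc1pos, h1, h2, h3⟩
end

section
/- Let (c_n)_{n≥1} be a sequence of nonnegative real numbers and define (a_n)_{n≥0} by a_0 = 1 and a_n = Σ_{k=1}^n c_k a_{n-k} for n ≥ 1. Then a_k · a_n ≤ a_{n+k} for all k, n ≥ 0. -/
/-- for the renewal-type recursion `a 0 = 1`,
`a n = ∑_{k=1}^n c k * a (n-k)` with `c k ≥ 0`, one has `a k * a n ≤ a (n+k)`. -/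
theorem stmt4 (c a : ℕ → ℝ) (hc : ∀ n, 0 ≤ c n) (ha0 : a 0 = 1)
    (ha : ∀ n, 1 ≤ n → a n = ∑ k ∈ Finset.Icc 1 n, c k * a (n - k)) :
    ∀ k n : ℕ, a k * a n ≤ a (n + k) := by
  have hnn : ∀ n, 0 ≤ a n := by
    intro n
    induction n using Nat.strong_induction_on with
    | _ n ih =>
      rcases Nat.eq_zero_or_pos n with h | h
      · simp [h, ha0]
      · rw [ha n h]
        apply Finset.sum_nonneg
        intro j hj
        simp only [Finset.mem_Icc] at hj
        exact mul_nonneg (hc j) (ih (n - j) (by omega))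
  intro k
  induction k using Nat.strong_induction_on with
  | _ k ih =>
    intro n
    rcases Nat.eq_zero_or_pos k with h | h
    · simp [h, ha0]
    · rw [ha k h, Finset.sum_mul]
      have key : ∀ j ∈ Finset.Icc 1 k, c j * a (k - j) * a n ≤ c j * a (n + k - j) := by
        intro j hj
        simp only [Finset.mem_Icc] at hj
        rw [mul_assoc]
        apply mul_le_mul_of_nonneg_left _ (hc j)
        have := ih (k - j) (by omega) n
        have h2 : n + (k - j) = n + k - j := by omega
        rwa [h2] at this
      calc ∑ j ∈ Finset.Icc 1 k, c j * a (k - j) * a n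
          ≤ ∑ j ∈ Finset.Icc 1 k, c j * a (n + k - j) := Finset.sum_le_sum key
        _ ≤ ∑ j ∈ Finset.Icc 1 (n + k), c j * a (n + k - j) := by
            apply Finset.sum_le_sum_of_subset_of_nonneg
            · exact Finset.Icc_subset_Icc_right (by omega)
            · intro j _ _; exact mul_nonneg (hc j) (hnn _)
        _ = a (n + k) := (ha (n + k) (by omega)).symm
end

section
/- Let g(z) = Σ_{n≥1} c_n z^n with c_n ≥ 0 and Σ_{n≥1} c_n = r² < 1. If the power series Σ c_n z^n has radius of convergence exactly 1, then the power series of 1/(1 - g(z)) about 0 also has radius of convergence exactly 1. -/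
open Finset

/-- let `g z = ∑_{n≥1} c n z^n` with `c n ≥ 0`, `∑ c n = r² < 1`,
and suppose the series `∑ c n z^n` has radius of convergence exactly 1
(it converges for `|x| < 1` and diverges for every `x > 1`). Then the Taylor
series of `1/(1-g)` at `0`, whose coefficients `a n` satisfy `a 0 = 1`,
`a n = ∑_{k=1}^n c k * a (n-k)`, also has radius of convergence exactly 1. -/
theorem stmt6 (c a : ℕ → ℝ) (r : ℝ)
    (hc : ∀ n, 0 ≤ c n) (hc0 : c 0 = 0)
    (hcs : Summable c) (hcsum : ∑' n, c n = r ^ 2) (hr0 : 0 ≤ r) (hr : r < 1)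
    (hrad : ∀ x : ℝ, 1 < x → ¬ Summable (fun n => c n * x ^ n))
    (ha0 : a 0 = 1)
    (ha : ∀ n, 1 ≤ n → a n = ∑ k ∈ Finset.Icc 1 n, c k * a (n - k)) :
    (∀ x : ℝ, 0 ≤ x → x < 1 → Summable (fun n => a n * x ^ n)) ∧
    (∀ x : ℝ, 1 < x → ¬ Summable (fun n => a n * x ^ n)) := by
  have apos : ∀ n, 0 ≤ a n := by
    intro n
    induction n using Nat.strong_induction_on with
    | _ n ih =>
      rcases Nat.eq_zero_or_pos n with h | h
      · simp [h, ha0]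
      · rw [ha n h]
        refine Finset.sum_nonneg fun k hk => ?_
        simp only [Finset.mem_Icc] at hk
        exact mul_nonneg (hc k) (ih (n - k) (by omega))
  have hca : ∀ n, c n ≤ a n := by
    intro n
    rcases Nat.eq_zero_or_pos n with h | h
    · simp [h, hc0, ha0]
    · rw [ha n h]
      calc c n = c n * a (n - n) := by simp [ha0]
        _ ≤ ∑ k ∈ Icc 1 n, c k * a (n - k) :=
          Finset.single_le_sum (fun k _ => mul_nonneg (hc k) (apos _))
            (by simp [mem_Icc]; omega)
  have hr2 : r ^ 2 < 1 := by nlinarith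
  constructor
  · intro x hx0 hx1
    have key : ∀ N, ∑ n ∈ range N, a n * x ^ n ≤ (1 - r ^ 2)⁻¹ := by
      intro N
      rcases Nat.eq_zero_or_pos N with h | h
      · have h1 : 0 < 1 - r ^ 2 := by linarith
        simp only [h, range_zero, Finset.sum_empty, inv_nonneg]
        linarith
      obtain ⟨M, rfl⟩ : ∃ M, N = M + 1 := ⟨N - 1, by omega⟩
      set S := ∑ n ∈ range (M + 1), a n * x ^ n with hS
      have hS0 : 0 ≤ S :=
        Finset.sum_nonneg fun n _ => mul_nonneg (apos n) (pow_nonneg hx0 n)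
      have hIcc : Finset.range (M + 1) = insert 0 (Icc 1 M) := by
        ext t; simp only [mem_range, mem_insert, mem_Icc]; omega
      have step : S ≤ 1 + r ^ 2 * S := by
        have e1 : S = 1 + ∑ n ∈ Icc 1 M, a n * x ^ n := by
          rw [hS, hIcc, Finset.sum_insert (by simp)]
          simp [ha0]
        have e2 : ∑ n ∈ Icc 1 M, a n * x ^ n
            = ∑ n ∈ Icc 1 M, ∑ k ∈ Icc 1 n, c k * a (n - k) * x ^ n := by
          refine Finset.sum_congr rfl fun n hn => ?_
          simp only [mem_Icc] at hn
          rw [ha n hn.1, Finset.sum_mul]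
        have e3 : ∑ n ∈ Icc 1 M, ∑ k ∈ Icc 1 n, c k * a (n - k) * x ^ n
            = ∑ k ∈ Icc 1 M, ∑ n ∈ Icc k M, c k * a (n - k) * x ^ n := by
          refine Finset.sum_comm' fun n k => ?_
          simp only [mem_Icc]; omega
        have e4 : ∀ k ∈ Icc 1 M, ∑ n ∈ Icc k M, c k * a (n - k) * x ^ n
            ≤ c k * x ^ k * S := by
          intro k hk
          simp only [mem_Icc] at hk
          have : Icc k M = Ico k (M + 1) := rfl
          rw [this, Finset.sum_Ico_eq_sum_range]
          have e5 : ∀ i, c k * a (k + i - k) * x ^ (k + i)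
              = c k * x ^ k * (a i * x ^ i) := by
            intro i
            rw [Nat.add_sub_cancel_left, pow_add]
            ring
          rw [Finset.sum_congr rfl fun i _ => e5 i, ← Finset.mul_sum]
          refine mul_le_mul_of_nonneg_left ?_
            (mul_nonneg (hc k) (pow_nonneg hx0 k))
          refine Finset.sum_le_sum_of_subset_of_nonneg ?_
            fun i _ _ => mul_nonneg (apos i) (pow_nonneg hx0 i)
          exact Finset.range_subset_range.mpr (by omega)
        calc S = 1 + ∑ k ∈ Icc 1 M, ∑ n ∈ Icc k M, c k * a (n - k) * x ^ n := by
              rw [e1, e2, e3]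
          _ ≤ 1 + ∑ k ∈ Icc 1 M, c k * x ^ k * S :=
              add_le_add_right (Finset.sum_le_sum e4) 1
          _ ≤ 1 + ∑ k ∈ Icc 1 M, c k * S := by
              refine add_le_add_right (Finset.sum_le_sum fun k _ => ?_) 1
              have : x ^ k ≤ 1 := pow_le_one₀ hx0 hx1.le
              nlinarith [mul_nonneg (mul_nonneg (hc k) (sub_nonneg.mpr this)) hS0]
          _ = 1 + (∑ k ∈ Icc 1 M, c k) * S := by rw [Finset.sum_mul]
          _ ≤ 1 + r ^ 2 * S := by
              have : ∑ k ∈ Icc 1 M, c k ≤ r ^ 2 := by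
                rw [← hcsum]
                exact Summable.sum_le_tsum _ (fun i _ => hc i) hcs
              nlinarith
      have h1 : 0 < 1 - r ^ 2 := by linarith
      rw [inv_eq_one_div, le_div_iff₀ h1]
      nlinarith
    exact summable_of_sum_range_le
      (fun n => mul_nonneg (apos n) (pow_nonneg hx0 n)) key
  · intro x hx hsum
    have hx0 : (0 : ℝ) ≤ x := by linarith
    exact hrad x hx (hsum.of_nonneg_of_le
      (fun n => mul_nonneg (hc n) (pow_nonneg hx0 n))
      (fun n => mul_le_mul_of_nonneg_right (hca n) (pow_nonneg hx0 n)))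
end

section
/- Let (c_n) with c_n ≥ 0, c_1 > 0, define (a_n) by a_0 = 1, a_n = Σ_{k=1}^n c_k a_{n-k}, and let H be the weighted Hardy space on 𝔻 with ‖z^n‖²_H = 1/a_n. Then the multiplier norm of the monomial z^n on H equals its Hilbert space norm: ‖z^n‖²_{Mult(H)} = 1/a_n. -/
/-- for the weighted Hardy space with `‖z^n‖²_H = 1/a n`, where
`a 0 = 1`, `a n = ∑_{k=1}^n c k * a (n-k)`, `c k ≥ 0`, `c 1 > 0`, the square of
the multiplier norm of `z^n`, namely `sup_k ‖z^{n+k}‖²/‖z^k‖² = sup_k a k / a (n+k)`,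
equals its Hilbert space norm squared `1/a n`; i.e. `1/a n` is the greatest
element of `{a k / a (n+k) : k ∈ ℕ}`. -/
theorem stmt8 (c a : ℕ → ℝ) (hc : ∀ n, 0 ≤ c n) (hc1 : 0 < c 1)
    (ha0 : a 0 = 1)
    (ha : ∀ n, 1 ≤ n → a n = ∑ k ∈ Finset.Icc 1 n, c k * a (n - k)) :
    ∀ n : ℕ, IsGreatest (Set.range fun k => a k / a (n + k)) (1 / a n) := by
  -- positivity of a
  have apos : ∀ n, 0 < a n := by
    intro n
    induction n using Nat.strong_induction_on with
    | _ n ih =>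
      rcases Nat.eq_zero_or_pos n with h0 | h1
      · rw [h0, ha0]; norm_num
      · rw [ha n h1]
        apply Finset.sum_pos'
        · intro i hi
          exact mul_nonneg (hc i) ((ih (n - i) (by
            simp only [Finset.mem_Icc] at hi; omega)).le)
        · refine ⟨1, Finset.mem_Icc.mpr ⟨le_refl 1, h1⟩, ?_⟩
          exact mul_pos hc1 (ih (n - 1) (by omega))
  -- supermultiplicativity: a m * a n ≤ a (m + n)
  have key : ∀ m n, a m * a n ≤ a (m + n) := by
    intro m
    induction m using Nat.strong_induction_on with
    | _ m ih =>
      intro n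
      rcases Nat.eq_zero_or_pos m with h0 | h1
      · rw [h0, ha0]; simp
      · rw [ha m h1, ha (m + n) (by omega), Finset.sum_mul]
        calc ∑ k ∈ Finset.Icc 1 m, c k * a (m - k) * a n
            ≤ ∑ k ∈ Finset.Icc 1 m, c k * a (m + n - k) := by
              apply Finset.sum_le_sum
              intro k hk
              simp only [Finset.mem_Icc] at hk
              rw [mul_assoc]
              have : a (m - k) * a n ≤ a (m - k + n) := ih (m - k) (by omega) n
              have h2 : m - k + n = m + n - k := by omega
              rw [h2] at this
              exact mul_le_mul_of_nonneg_left this (hc k)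
          _ ≤ ∑ k ∈ Finset.Icc 1 (m + n), c k * a (m + n - k) := by
              apply Finset.sum_le_sum_of_subset_of_nonneg
              · apply Finset.Icc_subset_Icc_right; omega
              · intro i _ _
                exact mul_nonneg (hc i) (apos _).le
  intro n
  constructor
  · exact ⟨0, by simp [ha0]⟩
  · rintro x ⟨k, rfl⟩
    simp only
    rw [div_le_div_iff₀ (apos _) (apos _), one_mul]
    have := key k n
    rw [mul_comm] at this
    linarith [key n k]
end

section
/- Let (b_n) ∈ ℓ² with b_1 ≠ 0 and ‖(b_n)‖_2 ≤ 1, and define f : 𝔻 → ℓ² by f(z) = (b_1 z, b_2 z², b_3 z³, ...). Then f is injective, holomorphic, and its image V = f(𝔻) equals the intersection of the zero sets of the polynomials p_n(z) = b_n z_1^n - b_1^n z_n, n ≥ 2, with the set {z ∈ ℓ² : |z_1| < |b_1|} (equivalently, with the open ball when ‖(b_n)‖_2 = 1). -/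
set_option maxHeartbeats 1000000


open Metric

/-- for `(b n) ∈ ℓ²` with `b 1 ≠ 0`, `‖b‖₂ ≤ 1` (indexed from 1 by
setting `b 0 = 0`), the map `f z = (b 1 z, b 2 z², …)` into `ℓ²` is injective and
holomorphic on the disc, and its image is the intersection of the zero sets of
the polynomials `b n z₁ⁿ - b 1ⁿ z_n` (`n ≥ 2`, together with `z₀ = 0`) with the
set `{|z₁| < |b 1|}`. -/
theorem stmt9 (b : ℕ → ℂ) (hb0 : b 0 = 0) (hb1 : b 1 ≠ 0)
    (hb2 : Summable (fun n => ‖b n‖ ^ 2)) (hbn : ∑' n, ‖b n‖ ^ 2 ≤ 1)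
    (f : ℂ → lp (fun _ : ℕ => ℂ) 2)
    (hf : ∀ z ∈ ball (0 : ℂ) 1, ∀ n, f z n = b n * z ^ n) :
    Set.InjOn f (ball 0 1) ∧
    DifferentiableOn ℂ f (ball 0 1) ∧
    f '' (ball 0 1) =
      {w : lp (fun _ : ℕ => ℂ) 2 |
        w 0 = 0 ∧ (∀ n, 2 ≤ n → b n * (w 1) ^ n = (b 1) ^ n * w n) ∧
        ‖w 1‖ < ‖b 1‖} := by
  -- each |b n| ≤ 1
  have hb_le : ∀ n, ‖b n‖ ≤ 1 := by
    intro n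
    have h1 : ‖b n‖ ^ 2 ≤ 1 := le_trans (le_hasSum hb2.hasSum n fun i _ => by positivity) hbn
    exact (pow_le_one_iff_of_nonneg (norm_nonneg _) two_ne_zero).mp h1
  have hball : ∀ z : ℂ, z ∈ ball (0:ℂ) 1 ↔ ‖z‖ < 1 := by
    intro z; simp
  -- injectivity
  have hinj : Set.InjOn f (ball 0 1) := by
    intro z hz w hw h
    have h1 : f z 1 = f w 1 := by rw [h]
    rw [hf z hz 1, hf w hw 1] at h1
    simpa [hb1] using h1
  refine ⟨hinj, ?_, ?_⟩
  · -- differentiability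
    intro z₀ hz₀
    have hz₀' : ‖z₀‖ < 1 := by simpa using hz₀
    set r : ℝ := (‖z₀‖ + 1) / 2 with hr
    have hr1 : r < 1 := by simp [hr]; linarith
    have hz₀r : ‖z₀‖ < r := by simp [hr]; linarith [norm_nonneg z₀]
    have hr0 : 0 ≤ r := by positivity
    set g : ℂ → lp (fun _ : ℕ => ℂ) 2 :=
      fun z => ∑' n, lp.single (E := fun _ : ℕ => ℂ) 2 n (b n * z ^ n) with hg
    have hgd : DifferentiableOn ℂ g (ball (0:ℂ) r) := by
      apply Complex.differentiableOn_tsum_of_summable_norm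
        (u := fun n => r ^ n) (summable_geometric_of_lt_one hr0 hr1)
      · intro n
        have : (fun z : ℂ => lp.single (E := fun _ : ℕ => ℂ) 2 n (b n * z ^ n)) =
            fun z : ℂ => (b n * z ^ n) • lp.single (E := fun _ : ℕ => ℂ) 2 n (1 : ℂ) := by
          funext z
          rw [← lp.single_smul]
          simp
        rw [this]
        exact (((differentiable_pow n).const_mul (b n)).smul_const _).differentiableOn
      · exact isOpen_ball
      · intro n w hw
        have hw' : ‖w‖ < r := by simpa using hw
        have : ‖lp.single (E := fun _ : ℕ => ℂ) 2 n ((fun k => b k * w ^ k) n)‖ =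
            ‖b n * w ^ n‖ := lp.norm_single (E := fun _ : ℕ => ℂ) (p := 2) (by norm_num) n (b n * w ^ n)
        rw [this]
        have h1 : ‖b n * w ^ n‖ ≤ 1 * ‖w‖ ^ n := by
          rw [norm_mul, norm_pow]
          gcongr
          exact hb_le n
        calc ‖b n * w ^ n‖ ≤ ‖w‖ ^ n := by simpa using h1
          _ ≤ r ^ n := pow_le_pow_left₀ (norm_nonneg w) hw'.le n
    have hfg : ∀ z ∈ ball (0:ℂ) 1, f z = g z := by
      intro z hz
      have hs : HasSum (fun n => lp.single (E := fun _ : ℕ => ℂ) 2 n (f z n)) (f z) :=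
        lp.hasSum_single (by norm_num) (f z)
      have he : (fun n => lp.single (E := fun _ : ℕ => ℂ) 2 n (f z n)) =
          fun n => lp.single (E := fun _ : ℕ => ℂ) 2 n (b n * z ^ n) := by
        funext n; rw [hf z hz n]
      rw [he] at hs
      exact hs.tsum_eq.symm
    have hgz : DifferentiableAt ℂ g z₀ :=
      (hgd.differentiableAt (isOpen_ball.mem_nhds (by simpa using hz₀r)))
    have : DifferentiableAt ℂ f z₀ := by
      apply hgz.congr_of_eventuallyEq
      filter_upwards [isOpen_ball.mem_nhds hz₀] with z hz using hfg z hz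
    exact this.differentiableWithinAt
  · -- image
    ext w
    constructor
    · rintro ⟨z, hz, rfl⟩
      have hz' : ‖z‖ < 1 := by simpa using hz
      refine ⟨?_, ?_, ?_⟩
      · rw [hf z hz 0]; simp [hb0]
      · intro n hn
        rw [hf z hz n, hf z hz 1]
        ring
      · rw [hf z hz 1]
        simp only [pow_one, norm_mul]
        calc ‖b 1‖ * ‖z‖ < ‖b 1‖ * 1 := by
              apply mul_lt_mul_of_pos_left hz'
              simpa using hb1
          _ = ‖b 1‖ := mul_one _
    · rintro ⟨h0, hn, h1⟩
      set z : ℂ := w 1 / b 1 with hzdef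
      have hz : z ∈ ball (0:ℂ) 1 := by
        have : ‖z‖ < 1 := by
          rw [hzdef, norm_div, div_lt_one (by simpa using hb1)]
          exact h1
        simpa using this
      refine ⟨z, hz, ?_⟩
      apply lp.ext
      funext n
      show f z n = w n
      rw [hf z hz n]
      match n with
      | 0 => simp [hb0, h0.symm]
      | 1 => rw [hzdef, pow_one]; field_simp
      | (m+2) =>
        have hm := hn (m+2) (by omega)
        have hb1p : (b 1) ^ (m+2) ≠ 0 := pow_ne_zero _ hb1
        rw [hzdef, div_pow]
        field_simp
        linear_combination hm
end

section
/- Let (b_n) ∈ ℓ² with b_1 ≠ 0, ‖(b_n)‖_2 = r < 1, such that the power series Σ |b_n|² z^n has radius of convergence 1. Define f(z) = (b_1 z, b_2 z², ...) for z in the closed unit disc. Then f(closed 𝔻) equals the full common zero locus in ℓ² of the polynomials {b_n z_1^n - b_1^n z_n : n ≥ 2}; in particular this zero locus is a compact subset of the open ball of ℓ². -/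
open Metric Filter

lemma hasSum_normsq (w : lp (fun _ : ℕ => ℂ) 2) :
    HasSum (fun n => ‖w n‖ ^ 2) (‖w‖ ^ 2) := by
  have h := lp.hasSum_norm (p := 2) (E := fun _ : ℕ => ℂ) (by norm_num) w
  rw [show ((2 : ENNReal)).toReal = ((2 : ℕ) : ℝ) by norm_num] at h
  simpa [Real.rpow_natCast] using h

lemma normsq_term (c z : ℂ) (n : ℕ) : ‖c * z ^ n‖ ^ 2 = ‖c‖ ^ 2 * (‖z‖ ^ 2) ^ n := by
  rw [norm_mul, norm_pow, mul_pow, ← pow_mul, ← pow_mul, Nat.mul_comm]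

/-- for `(b n) ∈ ℓ²` with `b 1 ≠ 0`, `‖b‖₂ = r < 1` (indexed from 1
via `b 0 = 0`), and `∑ |b n|² zⁿ` of radius of convergence exactly 1, the image
of the *closed* disc under `f z = (b 1 z, b 2 z², …)` equals the full common zero
locus in `ℓ²` of the polynomials `b n z₁ⁿ - b 1ⁿ z_n` (`n ≥ 2`, plus `z₀ = 0`);
in particular this zero locus is a compact subset of the open unit ball of `ℓ²`. -/
theorem stmt10 (b : ℕ → ℂ) (r : ℝ) (hb0 : b 0 = 0) (hb1 : b 1 ≠ 0)
    (hb2 : Summable (fun n => ‖b n‖ ^ 2)) (hbr : ∑' n, ‖b n‖ ^ 2 = r ^ 2)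
    (hr0 : 0 ≤ r) (hr1 : r < 1)
    (hrad : ∀ x : ℝ, 1 < x → ¬ Summable (fun n => ‖b n‖ ^ 2 * x ^ n))
    (f : ℂ → lp (fun _ : ℕ => ℂ) 2)
    (hf : ∀ z ∈ closedBall (0 : ℂ) 1, ∀ n, f z n = b n * z ^ n) :
    f '' (closedBall 0 1) =
      {w : lp (fun _ : ℕ => ℂ) 2 |
        w 0 = 0 ∧ ∀ n, 2 ≤ n → b n * (w 1) ^ n = (b 1) ^ n * w n} ∧
    IsCompact (f '' (closedBall 0 1)) ∧
    f '' (closedBall 0 1) ⊆ ball 0 1 := by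
  -- continuity of f on the closed ball
  have hcont : ContinuousOn f (closedBall (0 : ℂ) 1) := by
    set F : ℕ → ℂ → lp (fun _ : ℕ => ℂ) 2 :=
      fun N z => ∑ n ∈ Finset.range N, (b n * z ^ n) • lp.single (E := fun _ : ℕ => ℂ) 2 n (1 : ℂ) with hFdef
    have hFapp : ∀ N z m, (F N z) m = if m < N then b m * z ^ m else 0 := by
      intro N z m
      have h1 : (F N z) m
          = ∑ n ∈ Finset.range N, ((b n * z ^ n) • lp.single (E := fun _ : ℕ => ℂ) 2 n (1 : ℂ)) m := by
        rw [hFdef]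
        simp only [lp.coeFn_sum, Finset.sum_apply]
      rw [h1]
      have h2 : ∀ n, ((b n * z ^ n) • lp.single (E := fun _ : ℕ => ℂ) 2 n (1 : ℂ)) m
          = if m = n then b m * z ^ m else 0 := by
        intro n
        rw [lp.coeFn_smul, Pi.smul_apply]
        by_cases h : m = n
        · subst h; rw [lp.single_apply_self, if_pos rfl, smul_eq_mul, mul_one]
        · rw [lp.single_apply_ne 2 n _ h, if_neg h, smul_zero]
      simp only [h2]
      rw [Finset.sum_ite_eq (Finset.range N) m (fun _ => b m * z ^ m)]
      simp only [Finset.mem_range]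
    have hFc : ∀ N, Continuous (F N) := by
      intro N
      apply continuous_finset_sum
      intro n _
      exact (continuous_const.mul (continuous_pow n)).smul continuous_const
    have htail : Tendsto (fun N => ∑' k, ‖b (k + N)‖ ^ 2) atTop (nhds 0) :=
      tendsto_sum_nat_add (fun n => ‖b n‖ ^ 2)
    have hTU : TendstoUniformlyOn F f atTop (closedBall 0 1) := by
      rw [Metric.tendstoUniformlyOn_iff]
      intro ε hε
      have hε2 : 0 < ε ^ 2 := by positivity
      filter_upwards [htail.eventually_lt_const hε2] with N hN z hz
      rw [dist_eq_norm]
      have hz1 : ‖z‖ ≤ 1 := by rwa [mem_closedBall, dist_zero_right] at hz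
      set d := f z - F N z with hd
      have hdm : ∀ m, d m = if m < N then 0 else b m * z ^ m := by
        intro m
        rw [hd, lp.coeFn_sub, Pi.sub_apply, hf z hz m, hFapp N z m]
        by_cases h : m < N <;> simp [h]
      set g : ℕ → ℝ := fun m => if m < N then 0 else ‖b m‖ ^ 2 with hg
      have hgle : ∀ m, ‖d m‖ ^ 2 ≤ g m := by
        intro m
        rw [hdm m, hg]
        by_cases h : m < N
        · simp [h]
        · simp only [if_neg h]
          rw [normsq_term]
          have h1 : (‖z‖ ^ 2) ^ m ≤ 1 :=
            pow_le_one₀ (by positivity) (by nlinarith [norm_nonneg z])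
          exact mul_le_of_le_one_right (by positivity) h1
      have hgsum : Summable g := by
        refine Summable.of_nonneg_of_le ?_ ?_ hb2
        · intro m; rw [hg]; by_cases h : m < N <;> simp [h]
        · intro m; rw [hg]; by_cases h : m < N <;> simp [h]
      have hgt : ∑' m, g m = ∑' k, ‖b (k + N)‖ ^ 2 := by
        rw [← Summable.sum_add_tsum_nat_add N hgsum]
        have h1 : ∑ i ∈ Finset.range N, g i = 0 :=
          Finset.sum_eq_zero fun i hi => by simp [hg, Finset.mem_range.mp hi]
        have h2 : ∀ k, g (k + N) = ‖b (k + N)‖ ^ 2 := fun k => by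
          simp [hg, Nat.not_lt.mpr (Nat.le_add_left N k)]
        simp only [h1, h2, zero_add]
      have hds : ‖d‖ ^ 2 ≤ ∑' k, ‖b (k + N)‖ ^ 2 := by
        rw [← hgt]
        exact hasSum_le hgle (hasSum_normsq d) hgsum.hasSum
      nlinarith [norm_nonneg d]
    exact hTU.continuousOn (Filter.Eventually.of_forall fun N => (hFc N).continuousOn).frequently
  -- norm of f z
  have hkey : ∀ z ∈ closedBall (0 : ℂ) 1,
      HasSum (fun n => ‖b n‖ ^ 2 * (‖z‖ ^ 2) ^ n) (‖f z‖ ^ 2) := by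
    intro z hz
    have h := hasSum_normsq (f z)
    have he : (fun n => ‖b n‖ ^ 2 * (‖z‖ ^ 2) ^ n) = fun n => ‖f z n‖ ^ 2 := by
      funext n; rw [hf z hz n, normsq_term]
    rw [he]; exact h
  have hnorm : ∀ z ∈ closedBall (0 : ℂ) 1, ‖f z‖ < 1 := by
    intro z hz
    have hz1 : ‖z‖ ≤ 1 := by rwa [mem_closedBall, dist_zero_right] at hz
    have hr2 : HasSum (fun n => ‖b n‖ ^ 2) (r ^ 2) := hbr ▸ hb2.hasSum
    have hle : ‖f z‖ ^ 2 ≤ r ^ 2 := by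
      refine hasSum_le (fun n => ?_) (hkey z hz) hr2
      have h1 : (‖z‖ ^ 2) ^ n ≤ 1 :=
        pow_le_one₀ (by positivity) (by nlinarith [norm_nonneg z])
      exact mul_le_of_le_one_right (by positivity) h1
    nlinarith [norm_nonneg (f z)]
  have hsubset : f '' (closedBall 0 1) ⊆ ball 0 1 := by
    rintro _ ⟨z, hz, rfl⟩
    rw [mem_ball, dist_zero_right]
    exact hnorm z hz
  refine ⟨?_, (isCompact_closedBall (0 : ℂ) 1).image_of_continuousOn hcont, hsubset⟩
  apply Set.Subset.antisymm
  · rintro _ ⟨z, hz, rfl⟩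
    refine ⟨?_, ?_⟩
    · rw [hf z hz 0, hb0, zero_mul]
    · intro n hn
      rw [hf z hz 1, hf z hz n, pow_one]
      ring
  · rintro w ⟨hw0, hwn⟩
    set z := w 1 / b 1 with hzdef
    have hz1 : b 1 * z = w 1 := by
      rw [hzdef, mul_comm, div_mul_cancel₀ _ hb1]
    have hwz : ∀ n, w n = b n * z ^ n := by
      intro n
      match n with
      | 0 => rw [hw0, hb0, zero_mul]
      | 1 => rw [pow_one, hz1]
      | (m + 2) =>
        have h := hwn (m + 2) (by omega)
        rw [← hz1, mul_pow] at h
        have h2 : (b 1) ^ (m + 2) * (b (m + 2) * z ^ (m + 2))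
            = (b 1) ^ (m + 2) * (w (m + 2)) := by rw [← h]; ring
        exact (mul_left_cancel₀ (pow_ne_zero _ hb1) h2).symm
    have hsum : Summable (fun n => ‖b n‖ ^ 2 * (‖z‖ ^ 2) ^ n) := by
      have he : (fun n => ‖b n‖ ^ 2 * (‖z‖ ^ 2) ^ n) = fun n => ‖w n‖ ^ 2 := by
        funext n; rw [hwz n, normsq_term]
      rw [he]
      exact (hasSum_normsq w).summable
    have hz_le : ‖z‖ ≤ 1 := by
      by_contra h
      push_neg at h
      exact hrad (‖z‖ ^ 2) (by nlinarith) hsum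
    have hzmem : z ∈ closedBall (0 : ℂ) 1 := by
      rwa [mem_closedBall, dist_zero_right]
    refine ⟨z, hzmem, ?_⟩
    apply lp.ext
    funext n
    rw [hf z hzmem n]
    exact (hwz n).symm
end

section
/- Let V ⊆ 𝔻 and λ, μ ∈ V. Let ρ_λ, ρ_μ be the evaluation characters on the multiplier algebra Mult(H) of a reproducing kernel Hilbert space H on V with the Nevanlinna–Pick property (e.g., H = H² on V = 𝔻, Mult(H) = H^∞). Then d(λ,μ) ≤ ‖ρ_λ - ρ_μ‖ ≤ 2 d(λ,μ), where d is the pseudohyperbolic distance and the norm is the norm of the linear functional on Mult(H). -/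
open Metric

open Complex


noncomputable def mob (a z : ℂ) : ℂ := (z - a) / (1 - (starRingEnd ℂ) a * z)

lemma key_identity (a z : ℂ) :
    normSq (1 - (starRingEnd ℂ) a * z) - normSq (z - a) = (1 - normSq a) * (1 - normSq z) := by
  simp only [normSq_apply, sub_re, sub_im, mul_re, mul_im, one_re, one_im, conj_re, conj_im]
  ring

lemma denom_ne (a z : ℂ) (ha : ‖a‖ < 1) (hz : ‖z‖ ≤ 1) :
    1 - (starRingEnd ℂ) a * z ≠ 0 := by
  intro h
  have h1 : (1 : ℂ) = (starRingEnd ℂ) a * z := by linear_combination h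
  have : (1 : ℝ) = ‖(starRingEnd ℂ) a * z‖ := by rw [← h1]; simp
  rw [norm_mul, Complex.norm_conj] at this
  nlinarith [norm_nonneg a, norm_nonneg z]

lemma mob_lt_one (a z : ℂ) (ha : ‖a‖ < 1) (hz : ‖z‖ < 1) :
    ‖mob a z‖ < 1 := by
  have hd := denom_ne a z ha hz.le
  have hd' : 0 < ‖1 - (starRingEnd ℂ) a * z‖ := by
    simpa [norm_pos_iff] using hd
  rw [mob, norm_div, div_lt_one hd']
  have hsq : normSq (z - a) < normSq (1 - (starRingEnd ℂ) a * z) := by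
    have := key_identity a z
    have h1 : normSq a < 1 := by
      rw [← Complex.sq_norm]; nlinarith [norm_nonneg a]
    have h2 : normSq z < 1 := by
      rw [← Complex.sq_norm]; nlinarith [norm_nonneg z]
    nlinarith
  have := Real.sqrt_lt_sqrt (normSq_nonneg _) hsq
  simpa [Complex.norm_def] using this

lemma mob_diff (a : ℂ) (ha : ‖a‖ < 1) :
    DifferentiableOn ℂ (mob a) (ball 0 1) := by
  apply DifferentiableOn.div
  · exact (differentiable_id.sub_const a).differentiableOn
  · exact ((differentiable_const _).mul differentiable_id).const_sub 1 |>.differentiableOn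
  · intro z hz
    have : ‖z‖ < 1 := by simpa [mem_ball, Complex.dist_eq] using hz
    exact denom_ne a z ha this.le

lemma mob_self (a : ℂ) : mob a a = 0 := by simp [mob]

lemma mob_inv (m l : ℂ) (hm : ‖m‖ < 1) (hl : ‖l‖ < 1) :
    mob (-m) (mob m l) = l := by
  have h1 : 1 - (starRingEnd ℂ) m * l ≠ 0 := denom_ne m l hm hl.le
  have hml : ‖mob m l‖ < 1 := mob_lt_one m l hm hl
  have h2 : 1 - (starRingEnd ℂ) (-m) * mob m l ≠ 0 := by
    apply denom_ne (-m) _ (by simpa using hm) hml.le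
  simp only [mob] at h2 ⊢
  rw [div_eq_iff h2]
  have h1' : 1 - l * (starRingEnd ℂ) m ≠ 0 := by rwa [mul_comm]
  field_simp
  simp only [map_neg]
  ring

lemma schwarz_pick {f : ℂ → ℂ} (hd : DifferentiableOn ℂ f (ball 0 1))
    (hb : ∀ z ∈ ball (0 : ℂ) 1, ‖f z‖ ≤ 1)
    {l m : ℂ} (hl : ‖l‖ < 1) (hm : ‖m‖ < 1) :
    ‖f l - f m‖ ≤
      2 * (‖l - m‖ / ‖1 - (starRingEnd ℂ) m * l‖) := by
  set d : ℝ := ‖l - m‖ / ‖1 - (starRingEnd ℂ) m * l‖ with hd_def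
  have hmem : m ∈ ball (0 : ℂ) 1 := by simpa [mem_ball, Complex.dist_eq] using hm
  have hlmem : l ∈ ball (0 : ℂ) 1 := by simpa [mem_ball, Complex.dist_eq] using hl
  have hd0 : 0 ≤ d := by positivity
  -- main step: for all t ∈ (0,1), t * |f l - f m| ≤ 2 * d
  have main : ∀ t : ℝ, t ∈ Set.Ioo (0:ℝ) 1 → t * ‖f l - f m‖ ≤ 2 * d := by
    intro t ⟨ht0, ht1⟩
    set a : ℂ := (t : ℂ) * f m with ha_def
    have hfa : ‖a‖ < 1 := by
      rw [ha_def, norm_mul]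
      have : ‖(t : ℂ)‖ = t := by simp [Complex.norm_real, abs_of_pos ht0]
      rw [this]
      nlinarith [hb m hmem, norm_nonneg (f m)]
    set φ : ℂ → ℂ := mob (-m) with hφ_def
    have hmφ : ∀ z ∈ ball (0 : ℂ) 1, φ z ∈ ball (0 : ℂ) 1 := by
      intro z hz
      have : ‖z‖ < 1 := by simpa [mem_ball, Complex.dist_eq] using hz
      have := mob_lt_one (-m) z (by simpa using hm) this
      simpa [mem_ball, Complex.dist_eq, hφ_def] using this
    have htf : ∀ z ∈ ball (0 : ℂ) 1, ‖(t : ℂ) * f (φ z)‖ < 1 := by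
      intro z hz
      rw [norm_mul]
      have h1 : ‖(t : ℂ)‖ = t := by simp [Complex.norm_real, abs_of_pos ht0]
      rw [h1]
      nlinarith [hb (φ z) (hmφ z hz), norm_nonneg (f (φ z))]
    set g : ℂ → ℂ := fun z => mob a ((t : ℂ) * f (φ z)) with hg_def
    have hgd : DifferentiableOn ℂ g (ball 0 1) := by
      apply DifferentiableOn.comp (mob_diff a hfa)
      · exact ((hd.comp (mob_diff (-m) (by simpa using hm))
          (fun z hz => hmφ z hz)).const_smul (t : ℂ)).congr (fun z hz => by
            simp [smul_eq_mul, hφ_def])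
      · intro z hz
        have := htf z hz
        simpa [mem_ball, Complex.dist_eq] using this
    have hgm : Set.MapsTo g (ball 0 1) (ball 0 1) := by
      intro z hz
      have := mob_lt_one a _ hfa (htf z hz)
      simpa [mem_ball, Complex.dist_eq, hg_def] using this
    have hφ0 : φ 0 = m := by
      simp [hφ_def, mob]
    have hg0 : g 0 = 0 := by
      rw [hg_def]; simp only [hφ0]; exact mob_self a
    -- Schwarz lemma at w := mob m l
    have hw : ‖mob m l‖ < 1 := mob_lt_one m l hm hl
    have hsch := Complex.norm_le_norm_of_mapsTo_ball hgd (hgm.mono_right ball_subset_closedBall) hg0 hw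
    rw [hg_def] at hsch
    simp only [hφ_def, mob_inv m l hm hl] at hsch
    -- hsch : |mob a (t * f l)| ≤ |mob m l|
    have habs_mob : ‖mob m l‖ = d := by
      rw [mob, norm_div]
    have htfl : ‖(t:ℂ) * f l‖ < 1 := by
      rw [norm_mul]
      have h1 : ‖(t : ℂ)‖ = t := by simp [Complex.norm_real, abs_of_pos ht0]
      rw [h1]
      nlinarith [hb l hlmem, norm_nonneg (f l)]
    have hden : 0 < ‖1 - (starRingEnd ℂ) a * ((t:ℂ) * f l)‖ := by
      have := denom_ne a ((t:ℂ) * f l) hfa htfl.le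
      simpa [norm_pos_iff] using this
    rw [habs_mob, mob, norm_div, div_le_iff₀ hden] at hsch
    have hden2 : ‖1 - (starRingEnd ℂ) a * ((t:ℂ) * f l)‖ ≤ 2 := by
      calc ‖1 - (starRingEnd ℂ) a * ((t:ℂ) * f l)‖
          ≤ ‖1‖ + ‖(starRingEnd ℂ) a * ((t:ℂ) * f l)‖ :=
            norm_sub_le _ _
        _ ≤ 2 := by
            rw [norm_mul, Complex.norm_conj]
            have := mul_le_one₀ hfa.le (norm_nonneg _) htfl.le
            simp only [norm_one]; linarith
    have hnum : ‖(t:ℂ) * f l - a‖ = t * ‖f l - f m‖ := by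
      rw [ha_def, ← mul_sub, norm_mul]
      simp [Complex.norm_real, abs_of_pos ht0]
    rw [hnum] at hsch
    calc t * ‖f l - f m‖
        ≤ d * ‖1 - (starRingEnd ℂ) a * ((t:ℂ) * f l)‖ := hsch
      _ ≤ d * 2 := by nlinarith
      _ = 2 * d := by ring
  -- limit t → 1
  have : Filter.Tendsto (fun t : ℝ => t * ‖f l - f m‖) (nhdsWithin 1 (Set.Iio 1))
      (nhds (1 * ‖f l - f m‖)) :=
    (Filter.Tendsto.mul Filter.tendsto_id tendsto_const_nhds).mono_left nhdsWithin_le_nhds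
  have hle := le_of_tendsto this (by
    filter_upwards [Ioo_mem_nhdsLT_of_mem (by norm_num : (1:ℝ) ∈ Set.Ioc (0:ℝ) 1)] with t ht
    exact main t ht)
  linarith [hle]

/-- instance `H = H²` on `𝔻`, `Mult(H) = H^∞`: for `λ, μ ∈ 𝔻`,
`d(λ,μ) ≤ ‖ρ_λ - ρ_μ‖ ≤ 2 d(λ,μ)`, where
`‖ρ_λ - ρ_μ‖ = sup {|f λ - f μ| : f ∈ H^∞, ‖f‖_∞ ≤ 1}` and `d` is the
pseudohyperbolic distance. -/
theorem stmt12 (l m : ℂ) (hl : l ∈ ball (0 : ℂ) 1) (hm : m ∈ ball (0 : ℂ) 1) :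
    ‖l - m‖ / ‖1 - l * (starRingEnd ℂ) m‖ ≤
      sSup {x : ℝ | ∃ f : ℂ → ℂ, DifferentiableOn ℂ f (ball 0 1) ∧
        (∀ z ∈ ball (0 : ℂ) 1, ‖f z‖ ≤ 1) ∧
        x = ‖f l - f m‖} ∧
    sSup {x : ℝ | ∃ f : ℂ → ℂ, DifferentiableOn ℂ f (ball 0 1) ∧
        (∀ z ∈ ball (0 : ℂ) 1, ‖f z‖ ≤ 1) ∧
        x = ‖f l - f m‖} ≤
      2 * (‖l - m‖ / ‖1 - l * (starRingEnd ℂ) m‖) := by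
  have hl' : ‖l‖ < 1 := by simpa [mem_ball, Complex.dist_eq] using hl
  have hm' : ‖m‖ < 1 := by simpa [mem_ball, Complex.dist_eq] using hm
  have hcomm : ‖1 - l * (starRingEnd ℂ) m‖ =
      ‖1 - (starRingEnd ℂ) m * l‖ := by rw [mul_comm]
  set S := {x : ℝ | ∃ f : ℂ → ℂ, DifferentiableOn ℂ f (ball 0 1) ∧
        (∀ z ∈ ball (0 : ℂ) 1, ‖f z‖ ≤ 1) ∧
        x = ‖f l - f m‖} with hS
  have hbdd : BddAbove S := by
    refine ⟨2, fun x hx => ?_⟩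
    obtain ⟨f, hfd, hfb, rfl⟩ := hx
    calc ‖f l - f m‖ ≤ ‖f l‖ + ‖f m‖ :=
          norm_sub_le _ _
      _ ≤ 2 := by linarith [hfb l hl, hfb m hm]
  constructor
  · -- lower bound: mob m is a witness
    have hmem : ‖l - m‖ / ‖1 - l * (starRingEnd ℂ) m‖ ∈ S := by
      refine ⟨mob m, mob_diff m hm', fun z hz => ?_, ?_⟩
      · have : ‖z‖ < 1 := by simpa [mem_ball, Complex.dist_eq] using hz
        exact (mob_lt_one m z hm' this).le
      · rw [mob_self, sub_zero, mob, norm_div, hcomm]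
    exact le_csSup hbdd hmem
  · apply csSup_le
    · exact ⟨_, ⟨mob m, mob_diff m hm', fun z hz => (mob_lt_one m z hm'
        (by simpa [mem_ball, Complex.dist_eq] using hz)).le, rfl⟩⟩
    · rintro x ⟨f, hfd, hfb, rfl⟩
      rw [hcomm]
      exact schwarz_pick hfd hfb hl' hm'
end

section
/- Let v_{n,k} = (1 - 2^{-n}) e^{i k 2^{-n}} for n ≥ 1 and 0 ≤ k < 2^{n/2}. Then the measure μ = Σ_{n,k} (1 - |v_{n,k}|) δ_{v_{n,k}} is not a Carleson measure: for the Carleson boxes S_p = {r e^{iθ} : 1 - 2^{-p} ≤ r < 1, 0 ≤ θ < 2^{-p}}, one has 2^p · μ(S_p) ≥ p + 1 for every p ≥ 1. -/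
open MeasureTheory
open scoped ENNReal

/-- The points `v_{n,k} = (1 - 2^{-n}) e^{i k 2^{-n}}`. -/
noncomputable def vpt (q : ℕ × ℕ) : ℂ :=
  (((1 : ℝ) - (2 : ℝ) ^ (-(q.1 : ℝ)) : ℝ) : ℂ) *
    Complex.exp (Complex.I * (q.2 : ℂ) * (((2 : ℝ) ^ (-(q.1 : ℝ)) : ℝ) : ℂ))

/-- The index set `n ≥ 1`, `0 ≤ k < 2^{n/2}` (encoded as `k² < 2ⁿ`). -/
def idx : Type := {q : ℕ × ℕ // 1 ≤ q.1 ∧ q.2 ^ 2 < 2 ^ q.1}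

/-- The measure `μ = ∑_{n,k} (1 - |v_{n,k}|) δ_{v_{n,k}}`. -/
noncomputable def muV : Measure ℂ :=
  Measure.sum (fun q : idx => ENNReal.ofReal (1 - ‖vpt q.1‖) • Measure.dirac (vpt q.1))

/-- The Carleson box `S_p = {r e^{iθ} : 1 - 2^{-p} ≤ r < 1, 0 ≤ θ < 2^{-p}}`. -/
def Sbox (p : ℕ) : Set ℂ :=
  {z | 1 - (2 : ℝ) ^ (-(p : ℝ)) ≤ ‖z‖ ∧ ‖z‖ < 1 ∧
       0 ≤ Complex.arg z ∧ Complex.arg z < (2 : ℝ) ^ (-(p : ℝ))}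

lemma rpow_neg_nat (n : ℕ) : (2:ℝ) ^ (-(n:ℝ)) = ((2:ℝ)^n)⁻¹ := by
  rw [Real.rpow_neg (by norm_num), Real.rpow_natCast]

lemma rpow_neg_pos (n : ℕ) : 0 < (2:ℝ) ^ (-(n:ℝ)) :=
  Real.rpow_pos_of_pos (by norm_num) _

lemma rpow_neg_le_one (n : ℕ) : (2:ℝ) ^ (-(n:ℝ)) ≤ 1 := by
  rw [rpow_neg_nat]
  rw [inv_le_one_iff₀]
  right
  exact one_le_pow₀ (by norm_num)

lemma abs_vpt (n k : ℕ) : ‖vpt (n, k)‖ = 1 - (2:ℝ)^(-(n:ℝ)) := by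
  have h1 : (2:ℝ)^(-(n:ℝ)) ≤ 1 := rpow_neg_le_one n
  unfold vpt
  rw [norm_mul, Complex.norm_real, Real.norm_eq_abs, Complex.norm_exp]
  have : (Complex.I * (k:ℂ) * (((2:ℝ)^(-(n:ℝ)) : ℝ) : ℂ)).re = 0 := by
    rw [Complex.mul_re, Complex.ofReal_re, Complex.ofReal_im]; simp
  rw [this, Real.exp_zero, mul_one, abs_of_nonneg (by linarith)]

lemma arg_vpt (n k : ℕ) (hn : 1 ≤ n) (hθ : (k:ℝ) * (2:ℝ)^(-(n:ℝ)) ≤ Real.pi) :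
    Complex.arg (vpt (n, k)) = (k:ℝ) * (2:ℝ)^(-(n:ℝ)) := by
  set θ : ℝ := (k:ℝ) * (2:ℝ)^(-(n:ℝ)) with hθdef
  have hθ0 : 0 ≤ θ := mul_nonneg (Nat.cast_nonneg _) (rpow_neg_pos n).le
  have hr : 0 < 1 - (2:ℝ)^(-(n:ℝ)) := by
    have : (2:ℝ)^(-(n:ℝ)) < 1 := by
      rw [rpow_neg_nat]
      rw [inv_lt_one_iff₀]
      right
      exact one_lt_pow₀ (by norm_num) (by omega)
    linarith
  have hv : vpt (n, k) = (((1:ℝ) - (2:ℝ)^(-(n:ℝ)) : ℝ) : ℂ) * Complex.exp (θ * Complex.I) := by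
    unfold vpt
    congr 1
    rw [Complex.exp_mul_I]
    rw [show Complex.I * (k:ℂ) * (((2:ℝ)^(-(n:ℝ)) : ℝ) : ℂ) = ((θ : ℝ) : ℂ) * Complex.I by
      push_cast [hθdef]; ring, Complex.exp_mul_I]
  rw [hv, Complex.arg_real_mul _ hr, Complex.exp_mul_I,
    Complex.arg_cos_add_sin_mul_I ⟨by linarith [Real.pi_pos], hθ⟩]

lemma key_lt (p j k : ℕ) (hk : k < 2^j) :
    (k:ℝ) * (2:ℝ)^(-(((p+j:ℕ)):ℝ)) < (2:ℝ)^(-(p:ℝ)) := by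
  rw [rpow_neg_nat, rpow_neg_nat, pow_add]
  have h2j : (k:ℝ) < 2^j := by exact_mod_cast hk
  have hpos : (0:ℝ) < ((2:ℝ)^p * 2^j)⁻¹ := by positivity
  calc (k:ℝ) * ((2:ℝ)^p * 2^j)⁻¹ < (2:ℝ)^j * ((2:ℝ)^p * 2^j)⁻¹ := by
        exact mul_lt_mul_of_pos_right h2j hpos
    _ = ((2:ℝ)^p)⁻¹ := by field_simp

lemma mem_Sbox (p j k : ℕ) (hp : 1 ≤ p) (_hj : j ≤ p) (hk : k < 2^j) :
    vpt (p + j, k) ∈ Sbox p := by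
  have habs := abs_vpt (p + j) k
  have hlt := key_lt p j k hk
  have hθπ : (k:ℝ) * (2:ℝ)^(-(((p+j:ℕ)):ℝ)) ≤ Real.pi := by
    have := rpow_neg_le_one p
    have := Real.pi_gt_three
    linarith
  have harg := arg_vpt (p + j) k (by omega) hθπ
  have hθ0 : 0 ≤ (k:ℝ) * (2:ℝ)^(-(((p+j:ℕ)):ℝ)) :=
    mul_nonneg (Nat.cast_nonneg _) (rpow_neg_pos _).le
  refine ⟨?_, ?_, ?_, ?_⟩
  · rw [habs]
    have : (2:ℝ)^(-(((p+j:ℕ)):ℝ)) ≤ (2:ℝ)^(-(p:ℝ)) := by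
      rw [rpow_neg_nat, rpow_neg_nat]
      gcongr
      · norm_num
      · omega
    linarith
  · rw [habs]; linarith [rpow_neg_pos (p + j)]
  · rw [harg]; exact hθ0
  · rw [harg]; exact hlt

lemma ofReal_mass (n : ℕ) :
    ENNReal.ofReal ((2:ℝ)^(-(n:ℝ))) = ((2:ℝ≥0∞)^n)⁻¹ := by
  rw [rpow_neg_nat, ENNReal.ofReal_inv_of_pos (by positivity)]
  congr 1
  rw [ENNReal.ofReal_pow (by norm_num)]
  norm_num

/-- `μ` is not a Carleson measure: `2^p · μ(S_p) ≥ p + 1` for all `p ≥ 1`. -/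
theorem stmt14 : ∀ p : ℕ, 1 ≤ p → ((p : ℝ≥0∞) + 1) ≤ 2 ^ p * muV (Sbox p) := by
  intro p hp
  have ha : Measurable fun z : ℂ => ‖z‖ := continuous_norm.measurable
  have hb := Complex.measurable_arg
  have hmeas : MeasurableSet (Sbox p) :=
    MeasurableSet.inter (ha measurableSet_Ici)
      (MeasurableSet.inter (ha measurableSet_Iio)
        (MeasurableSet.inter (hb measurableSet_Ici) (hb measurableSet_Iio)))
  set f : idx → ℝ≥0∞ := fun q =>
    ENNReal.ofReal (1 - ‖vpt q.1‖) * (Sbox p).indicator 1 (vpt q.1) with hf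
  have hsum : muV (Sbox p) = ∑' q : idx, f q := by
    rw [muV, Measure.sum_apply _ hmeas]
    congr 1
    ext q
    rw [Measure.smul_apply, Measure.dirac_apply' _ hmeas, smul_eq_mul]
  -- the injection
  set ι : (Σ j : Fin (p+1), Fin (2^(j:ℕ))) → idx := fun x =>
    ⟨(p + (x.1:ℕ), (x.2:ℕ)), by
      constructor
      · omega
      · have h1 : (x.2:ℕ)^2 < (2^(x.1:ℕ))^2 :=
          Nat.pow_lt_pow_left x.2.2 (by norm_num)
        calc (x.2:ℕ)^2 < (2^(x.1:ℕ))^2 := h1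
          _ = 2^((x.1:ℕ)*2) := by rw [pow_mul]
          _ ≤ 2^(p + (x.1:ℕ)) := Nat.pow_le_pow_right (by norm_num)
              (by have := x.1.2; omega)⟩ with hι
  have hinj : Function.Injective ι := by
    rintro ⟨j1, k1⟩ ⟨j2, k2⟩ h
    have h' : ((p + (j1:ℕ), (k1:ℕ)) : ℕ×ℕ) = (p + (j2:ℕ), (k2:ℕ)) := congrArg Subtype.val h
    rw [Prod.ext_iff] at h'
    obtain ⟨h1, h2⟩ := h'
    simp only at h1 h2
    have hj : j1 = j2 := Fin.ext (by omega)
    subst hj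
    have hk : k1 = k2 := Fin.ext h2
    rw [hk]
  have hcomp : ∀ x : (Σ j : Fin (p+1), Fin (2^(j:ℕ))),
      f (ι x) = ((2:ℝ≥0∞)^(p + (x.1:ℕ)))⁻¹ := by
    rintro ⟨j, k⟩
    have hmem : vpt (p + (j:ℕ), (k:ℕ)) ∈ Sbox p :=
      mem_Sbox p j k hp (by have := j.2; omega) k.2
    simp only [hf, hι, Set.indicator_of_mem hmem, Pi.one_apply, mul_one]
    rw [abs_vpt]
    rw [show (1:ℝ) - (1 - (2:ℝ)^(-((p + (j:ℕ) : ℕ):ℝ))) = (2:ℝ)^(-((p + (j:ℕ) : ℕ):ℝ)) by ring]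
    exact ofReal_mass _
  have hlow : ∑' x : (Σ j : Fin (p+1), Fin (2^(j:ℕ))), f (ι x) ≤ ∑' q : idx, f q :=
    ENNReal.tsum_comp_le_tsum_of_injective hinj f
  have hcalc : ∑' x : (Σ j : Fin (p+1), Fin (2^(j:ℕ))), f (ι x)
      = ((p:ℝ≥0∞) + 1) * ((2:ℝ≥0∞)^p)⁻¹ := by
    simp_rw [hcomp]
    rw [tsum_fintype, ← Finset.univ_sigma_univ, Finset.sum_sigma]
    have hterm : ∀ j : Fin (p+1),
        ∑ k : Fin (2^(j:ℕ)), ((2:ℝ≥0∞)^(p + (j:ℕ)))⁻¹ = ((2:ℝ≥0∞)^p)⁻¹ := by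
      intro j
      rw [Finset.sum_const, Finset.card_univ, Fintype.card_fin, nsmul_eq_mul]
      have h2 : ((2^(j:ℕ) : ℕ) : ℝ≥0∞) = (2:ℝ≥0∞)^(j:ℕ) := by push_cast; ring
      rw [h2, pow_add, ENNReal.mul_inv (Or.inl (by positivity)) (Or.inl (by simp)),
        mul_comm ((2:ℝ≥0∞)^p)⁻¹, ← mul_assoc,
        ENNReal.mul_inv_cancel (by positivity) (by simp), one_mul]
    simp_rw [hterm]
    rw [Finset.sum_const, Finset.card_univ, Fintype.card_fin, nsmul_eq_mul]
    push_cast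
    ring
  have : ((p:ℝ≥0∞) + 1) * ((2:ℝ≥0∞)^p)⁻¹ ≤ muV (Sbox p) := by
    rw [hsum, ← hcalc]; exact hlow
  calc ((p:ℝ≥0∞) + 1) = 2^p * (((p:ℝ≥0∞) + 1) * ((2:ℝ≥0∞)^p)⁻¹) := by
        rw [← mul_assoc, mul_comm ((2:ℝ≥0∞)^p), mul_assoc,
          ENNReal.mul_inv_cancel (by positivity) (by simp), mul_one]
    _ ≤ 2^p * muV (Sbox p) := mul_le_mul_right this _
end

section
/- Let r ∈ (0,1), b(z) = (z - r)/(1 - r z), and f(z) = (z², b(z)²)/√2 mapping 𝔻 into ℂ². Then: (i) ‖f(z)‖ = 1 whenever |z| = 1, so f maps 𝔻 into the open unit ball B₂; (ii) f(w) = f(z) with z, w in the closed disc implies w = z or {z, w} = {1, -1}; in particular f is injective on 𝔻 and f(1) = f(-1); (iii) f'(z) ≠ 0 for all z in the closed disc. -/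
open Metric

/-- for `0 < r < 1`, `b z = (z - r)/(1 - r z)` and
`f z = (z², b z²)/√2 : ℂ → ℂ²`:
(i) `‖f z‖ = 1` on the circle and `f` maps `𝔻` into the open unit ball `B₂`
    (in the Euclidean/Hermitian norm, `|f₁|² + |f₂|² `);
(ii) `f w = f z` on the closed disc implies `w = z` or `{z, w} = {1, -1}`
    (in particular `f` is injective on `𝔻` and `f 1 = f (-1)`);
(iii) `f' z ≠ 0` on the closed disc. -/
theorem stmt17 (r : ℝ) (hr0 : 0 < r) (hr1 : r < 1) (f : ℂ → ℂ × ℂ)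
    (hf : ∀ z : ℂ, f z =
      (z ^ 2 / ((Real.sqrt 2 : ℝ) : ℂ),
       ((z - (r : ℂ)) / (1 - (r : ℂ) * z)) ^ 2 / ((Real.sqrt 2 : ℝ) : ℂ))) :
    (∀ z : ℂ, ‖z‖ = 1 →
        ‖(f z).1‖ ^ 2 + ‖(f z).2‖ ^ 2 = 1) ∧
    (∀ z : ℂ, ‖z‖ < 1 →
        ‖(f z).1‖ ^ 2 + ‖(f z).2‖ ^ 2 < 1) ∧
    (∀ z ∈ closedBall (0 : ℂ) 1, ∀ w ∈ closedBall (0 : ℂ) 1, f w = f z →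
        w = z ∨ (z = 1 ∧ w = -1) ∨ (z = -1 ∧ w = 1)) ∧
    (∀ z ∈ closedBall (0 : ℂ) 1, deriv f z ≠ 0) := by
  have hc : ((Real.sqrt 2 : ℝ) : ℂ) ≠ 0 := by
    simp [Real.sqrt_eq_zero']
  have habs2 : ∀ x : ℂ, ‖x / ((Real.sqrt 2 : ℝ):ℂ)‖^2 = ‖x‖ ^2 / 2 := by
    intro x
    rw [norm_div, div_pow, Complex.norm_of_nonneg (Real.sqrt_nonneg 2),
      Real.sq_sqrt (by norm_num)]
  have hkey : ∀ z : ℂ, ‖1 - (r:ℂ)*z‖^2 - ‖z - (r:ℂ)‖^2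
      = (1 - r^2) * (1 - ‖z‖ ^2) := by
    intro z
    simp only [Complex.sq_norm, Complex.normSq_apply, Complex.sub_re, Complex.sub_im,
      Complex.mul_re, Complex.mul_im, Complex.one_re, Complex.one_im,
      Complex.ofReal_re, Complex.ofReal_im]
    ring
  have hden : ∀ z : ℂ, ‖z‖ ≤ 1 → (1 - (r:ℂ)*z) ≠ 0 := by
    intro z hz h
    have h1 : (r:ℂ)*z = 1 := by linear_combination -h
    have : ‖(r:ℂ)*z‖ = 1 := by rw [h1]; simp
    rw [norm_mul, Complex.norm_of_nonneg hr0.le] at this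
    nlinarith [norm_nonneg z]
  have hr2 : (1:ℂ) - (r:ℂ)^2 ≠ 0 := by
    intro h
    have h' : ((r:ℝ)^2 : ℂ) = ((1:ℝ) : ℂ) := by push_cast; linear_combination -h
    have : (r:ℝ)^2 = 1 := by exact_mod_cast h'
    nlinarith
  have hrc : ((r:ℝ):ℂ) ≠ 0 := by exact_mod_cast hr0.ne'
  refine ⟨?_, ?_, ?_, ?_⟩
  · -- (i)
    intro z hz
    have hd := hden z hz.le
    have hda : ‖1 - (r:ℂ)*z‖ ≠ 0 := norm_ne_zero_iff.mpr hd
    have hsq : ‖1 - (r:ℂ)*z‖^2 = ‖z - (r:ℂ)‖^2 := by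
      have := hkey z; rw [hz] at this; nlinarith
    have hq1 : ‖(z - (r:ℂ))/(1 - (r:ℂ)*z)‖ = 1 := by
      rw [norm_div, div_eq_one_iff_eq hda]
      nlinarith [norm_nonneg (z - (r:ℂ)), norm_nonneg (1 - (r:ℂ)*z)]
    rw [hf]
    simp only
    rw [habs2, habs2, norm_pow, norm_pow, hz, hq1]
    norm_num
  · -- (ii)
    intro z hz
    have hd := hden z hz.le
    have hda : 0 < ‖1 - (r:ℂ)*z‖ := norm_pos_iff.mpr hd
    have h1 : ‖z‖ ^ 2 < 1 := by
      nlinarith [norm_nonneg z]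
    have h2 : ‖(z - (r:ℂ))/(1 - (r:ℂ)*z)‖ ^ 2 < 1 := by
      rw [norm_div, div_pow, div_lt_one (by positivity)]
      have hpos : (0:ℝ) < (1 - r^2)*(1 - ‖z‖^2) :=
        mul_pos (by nlinarith) (by nlinarith)
      linarith [hkey z]
    rw [hf]
    simp only
    rw [habs2, habs2, norm_pow, norm_pow]
    nlinarith [norm_nonneg z, norm_nonneg ((z - (r:ℂ))/(1 - (r:ℂ)*z)),
      sq_nonneg (‖z‖), sq_nonneg (‖(z - (r:ℂ))/(1 - (r:ℂ)*z)‖)]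
  · -- (iii)
    intro z hz w hw heq
    rw [mem_closedBall_zero_iff] at hz hw
    rw [hf, hf, Prod.mk.injEq] at heq
    obtain ⟨e1, e2⟩ := heq
    have hdz := hden z hz
    have hdw := hden w hw
    have hw2 : w^2 = z^2 := by
      field_simp at e1; exact e1
    have h0 : (w - z)*(w + z) = 0 := by linear_combination hw2
    rcases mul_eq_zero.mp h0 with h | h
    · left; linear_combination h
    · -- w = -z
      have hwz : w = -z := by linear_combination h
      have ecross : (w - (r:ℂ))^2 * (1 - (r:ℂ)*z)^2 = (z - (r:ℂ))^2 * (1 - (r:ℂ)*w)^2 := by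
        apply mul_right_cancel₀ hc
        rw [div_left_inj' hc, div_pow, div_pow,
          div_eq_div_iff (pow_ne_zero 2 hdw) (pow_ne_zero 2 hdz)] at e2
        linear_combination ((Real.sqrt 2 : ℝ) : ℂ) * e2
      rw [hwz] at ecross
      have key : (4*(r:ℂ)*(1 - (r:ℂ)^2)) * (z * (1 - z^2)) = 0 := by
        linear_combination ecross
      have h4 : (4*(r:ℂ)*(1 - (r:ℂ)^2)) ≠ 0 := by
        exact mul_ne_zero (mul_ne_zero (by norm_num) hrc) hr2
      have hz0 : z * (1 - z^2) = 0 := by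
        rcases mul_eq_zero.mp key with h' | h'
        · exact absurd h' h4
        · exact h'
      rcases mul_eq_zero.mp hz0 with h' | h'
      · left; rw [hwz, h']; ring
      · have : (z - 1)*(z + 1) = 0 := by linear_combination -h'
        rcases mul_eq_zero.mp this with h'' | h''
        · right; left
          constructor
          · linear_combination h''
          · rw [hwz]; rw [show z = 1 by linear_combination h'']
        · right; right
          constructor
          · linear_combination h''
          · rw [hwz, show z = -1 by linear_combination h'']; ring
  · -- (iv)
    intro z hz
    rw [mem_closedBall_zero_iff] at hz
    have hd := hden z hz
    have hfe : f = fun z : ℂ => (z ^ 2 / ((Real.sqrt 2 : ℝ) : ℂ),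
       ((z - (r : ℂ)) / (1 - (r : ℂ) * z)) ^ 2 / ((Real.sqrt 2 : ℝ) : ℂ)) := funext hf
    have h1 : HasDerivAt (fun z : ℂ => z ^ 2 / ((Real.sqrt 2 : ℝ) : ℂ))
        (2*z / ((Real.sqrt 2 : ℝ) : ℂ)) z := by
      have := (hasDerivAt_pow 2 z).div_const ((Real.sqrt 2 : ℝ) : ℂ)
      simpa using this
    have hu : HasDerivAt (fun z : ℂ => z - (r:ℂ)) 1 z := (hasDerivAt_id z).sub_const _
    have hv : HasDerivAt (fun z : ℂ => 1 - (r:ℂ)*z) (-(r:ℂ)) z := by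
      simpa using ((hasDerivAt_id z).const_mul (r:ℂ)).const_sub 1
    have hq : HasDerivAt (fun z : ℂ => (z - (r:ℂ)) / (1 - (r:ℂ)*z))
        ((1 - (r:ℂ)^2)/(1 - (r:ℂ)*z)^2) z := by
      have := hu.div hv hd
      exact this.congr_deriv (by ring)
    have h2 : HasDerivAt (fun z : ℂ => ((z - (r : ℂ)) / (1 - (r : ℂ) * z)) ^ 2 / ((Real.sqrt 2 : ℝ) : ℂ))
        (2 * ((z - (r : ℂ)) / (1 - (r : ℂ) * z)) * ((1 - (r:ℂ)^2)/(1 - (r:ℂ)*z)^2)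
          / ((Real.sqrt 2 : ℝ) : ℂ)) z := by
      exact ((hq.pow 2).div_const ((Real.sqrt 2 : ℝ) : ℂ)).congr_deriv (by push_cast; ring)
    have hder : HasDerivAt f ((2*z / ((Real.sqrt 2 : ℝ) : ℂ)),
        (2 * ((z - (r : ℂ)) / (1 - (r : ℂ) * z)) * ((1 - (r:ℂ)^2)/(1 - (r:ℂ)*z)^2)
          / ((Real.sqrt 2 : ℝ) : ℂ))) z := by
      rw [hfe]; exact h1.prodMk h2
    rw [hder.deriv]
    intro h0
    rw [Prod.mk_eq_zero] at h0
    obtain ⟨c1, c2⟩ := h0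
    have hz0 : z = 0 := by
      field_simp at c1
      linear_combination c1/2
    rw [hz0] at c2
    simp only [zero_sub, mul_zero, sub_zero, one_pow, div_one] at c2
    rw [div_eq_zero_iff] at c2
    rcases c2 with c2 | c2
    · have : (r:ℂ) * (1 - (r:ℂ)^2) = 0 := by linear_combination -c2/2
      rcases mul_eq_zero.mp this with h' | h'
      · exact hrc h'
      · exact hr2 h'
    · exact hc c2
end
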